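/- arXiv:2003.14063 — 7 statements merged into one kernel-verified Lean document; each statement's English description precedes it below -/
import Mathlib

section
/- Let C be a linear [n,k] code over F_q with parity-check matrix H (an (n-k)×n matrix), and let A_s denote the number of codewords of C of Hamming weight s. For any integer ν with 1 ≤ ν ≤ n, the sum over s from 0 to ν of binom(n-s, ν-s)·A_s equals the sum over r from 0 to ν of N_H(ν,r)·q^(ν-r), where N_H(ν,r) is the number of (n-k)×ν submatrices of H (choices of ν columns of H) having rank r. -/
open Finset Matrix

lemma aux_count_supersets {α : Type*} [Fintype α] [DecidableEq α]
    (T : Finset α) (ν : ℕ) (hTν : T.card ≤ ν) :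
    ((univ.powersetCard ν : Finset (Finset α)).filter (fun I => T ⊆ I)).card
      = (Fintype.card α - T.card).choose (ν - T.card) := by
  rw [show (Fintype.card α - T.card).choose (ν - T.card)
      = ((univ \ T).powersetCard (ν - T.card)).card from by
    rw [Finset.card_powersetCard, Finset.card_sdiff_of_subset (Finset.subset_univ T), Finset.card_univ]]
  apply Finset.card_bij' (fun I _ => I \ T) (fun J _ => J ∪ T)
  · intro I hI
    simp only [Finset.mem_filter, Finset.mem_powersetCard_univ] at hI
    rw [Finset.mem_powersetCard]
    exact ⟨Finset.sdiff_subset_sdiff (Finset.subset_univ I) le_rfl,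
      by rw [Finset.card_sdiff_of_subset hI.2, hI.1]⟩
  · intro J hJ
    rw [Finset.mem_powersetCard] at hJ
    have hdisj : Disjoint J T := Finset.disjoint_of_subset_left hJ.1 (Finset.sdiff_disjoint)
    simp only [Finset.mem_filter, Finset.mem_powersetCard_univ]
    constructor
    · rw [Finset.card_union_of_disjoint hdisj, hJ.2, Nat.sub_add_cancel hTν]
    · exact Finset.subset_union_right
  · intro I hI
    simp only [Finset.mem_filter] at hI
    exact Finset.sdiff_union_of_subset hI.2
  · intro J hJ
    rw [Finset.mem_powersetCard] at hJ
    exact Finset.union_sdiff_cancel_right (Finset.disjoint_of_subset_left hJ.1 Finset.sdiff_disjoint)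

lemma aux_count_supersets_zero {α : Type*} [Fintype α] [DecidableEq α]
    (T : Finset α) (ν : ℕ) (hTν : ν < T.card) :
    ((univ.powersetCard ν : Finset (Finset α)).filter (fun I => T ⊆ I)).card = 0 := by
  rw [Finset.card_eq_zero, Finset.filter_eq_empty_iff]
  intro I hI hTI
  rw [Finset.mem_powersetCard_univ] at hI
  exact absurd (Finset.card_le_card hTI) (by omega)

lemma aux_kernel_count {m : ℕ} {n : ℕ} (F : Type*) [Field F] [Fintype F] [DecidableEq F]
    (H : Matrix (Fin m) (Fin n) F) (I : Finset (Fin n)) :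
    ((univ : Finset (Fin n → F)).filter
        (fun x => H.mulVec x = 0 ∧ ∀ j, x j ≠ 0 → j ∈ I)).card
      = Fintype.card F ^ (I.card - (H.submatrix id (fun j : {j // j ∈ I} => j.1)).rank) := by
  classical
  set M := H.submatrix id (fun j : {j // j ∈ I} => j.1) with hM
  have key : ∀ x : Fin n → F, (∀ j, x j ≠ 0 → j ∈ I) →
      H.mulVec x = M.mulVec (fun j : {j // j ∈ I} => x j.1) := by
    intro x hx
    funext i
    simp only [Matrix.mulVec, dotProduct, hM, Matrix.submatrix_apply, id_eq]
    rw [Finset.sum_coe_sort I (fun j => H i j * x j)]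
    symm
    apply Finset.sum_subset (Finset.subset_univ I)
    intro j _ hj
    rw [of_not_not (fun h => hj (hx j h)), mul_zero]
  -- the equivalence with the kernel
  let e : {x : Fin n → F // H.mulVec x = 0 ∧ ∀ j, x j ≠ 0 → j ∈ I}
      ≃ LinearMap.ker M.mulVecLin := {
    toFun := fun x => ⟨fun j => x.1 j.1, by
      rw [LinearMap.mem_ker, Matrix.mulVecLin_apply, ← key x.1 x.2.2, x.2.1]⟩
    invFun := fun y => ⟨fun j => if h : j ∈ I then y.1 ⟨j, h⟩ else 0, by
      constructor
      · have hsupp : ∀ j : Fin n, (if h : j ∈ I then y.1 ⟨j, h⟩ else 0) ≠ 0 → j ∈ I := by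
          intro j hj
          by_contra h
          simp [h] at hj
        rw [key _ hsupp]
        have : (fun j : {j // j ∈ I} => if h : j.1 ∈ I then y.1 ⟨j.1, h⟩ else 0) = y.1 := by
          funext j; simp [j.2]
        rw [this]
        exact y.2
      · intro j hj
        by_contra h
        simp [h] at hj⟩
    left_inv := fun x => by
      ext j
      by_cases h : j ∈ I
      · simp [h]
      · simp only [h, dif_neg, not_false_iff]
        exact (of_not_not (fun hc => h (x.2.2 j hc))).symm
    right_inv := fun y => by
      ext j
      simp [j.2] }
  have hcard : Fintype.card {x : Fin n → F // H.mulVec x = 0 ∧ ∀ j, x j ≠ 0 → j ∈ I}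
      = Fintype.card (LinearMap.ker M.mulVecLin) := Fintype.card_congr e
  rw [Fintype.card_subtype] at hcard
  rw [hcard]
  rw [Module.card_eq_pow_finrank (K := F) (V := LinearMap.ker M.mulVecLin)]
  congr 1
  have h2 : Module.finrank F (LinearMap.range M.mulVecLin)
      + Module.finrank F (LinearMap.ker M.mulVecLin)
      = Module.finrank F ({j // j ∈ I} → F) :=
    LinearMap.finrank_range_add_finrank_ker M.mulVecLin
  have h3 : Module.finrank F ({j // j ∈ I} → F) = I.card := by
    rw [Module.finrank_fintype_fun_eq_card, Fintype.card_coe]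
  have h4 : M.rank = Module.finrank F (LinearMap.range M.mulVecLin) := by rw [Matrix.rank]
  rw [h4, ← h3, ← h2, Nat.add_sub_cancel_left]

/-- **Proposition (number of matrices).** For a linear `[n,k]` code over `F_q` with
parity-check matrix `H`, weight distribution `A` and `N ν r` the number of
`(n-k) × ν` column-submatrices of `H` of rank `r`, for every `1 ≤ ν ≤ n`:
`∑_{s=0}^{ν} C(n-s, ν-s) A_s = ∑_{r=0}^{ν} N_H(ν,r) q^{ν-r}`. -/
theorem weight_distribution_submatrix_count
    (q n k : ℕ) (F : Type*) [Field F] [Fintype F] [DecidableEq F]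
    (hq : Fintype.card F = q) (hkn : k ≤ n)
    (H : Matrix (Fin (n - k)) (Fin n) F)
    (hrank : H.rank = n - k)
    (A : ℕ → ℕ)
    (hA : ∀ s, A s = Nat.card {x : Fin n → F // H.mulVec x = 0 ∧ hammingNorm x = s})
    (N : ℕ → ℕ → ℕ)
    (hN : ∀ ν r, N ν r = ((univ.powersetCard ν : Finset (Finset (Fin n))).filter
      (fun I => (H.submatrix id (fun j : {j // j ∈ I} => j.1)).rank = r)).card)
    (ν : ℕ) (hν1 : 1 ≤ ν) (hνn : ν ≤ n) :
    ∑ s ∈ range (ν + 1), (n - s).choose (ν - s) * A s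
      = ∑ r ∈ range (ν + 1), N ν r * q ^ (ν - r) := by
  classical
  subst hq
  set P := (univ.powersetCard ν : Finset (Finset (Fin n))) with hP
  set CW := (univ.filter (fun x : Fin n → F => H.mulVec x = 0)) with hCW
  have hnorm : ∀ x : Fin n → F, hammingNorm x = (univ.filter (fun j => x j ≠ 0)).card :=
    fun _ => rfl
  have hIcard : ∀ I ∈ P, I.card = ν := fun I hI => (Finset.mem_powersetCard_univ.mp hI)
  -- RHS as a sum over column subsets
  have hR : ∑ r ∈ range (ν + 1), N ν r * Fintype.card F ^ (ν - r)
      = ∑ I ∈ P, Fintype.card F ^ (ν - (H.submatrix id (fun j : {j // j ∈ I} => j.1)).rank) := by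
    rw [← Finset.sum_fiberwise_of_maps_to
      (g := fun I : Finset (Fin n) => (H.submatrix id (fun j : {j // j ∈ I} => j.1)).rank)
      (t := range (ν + 1))
      (fun I hI => by
        rw [Finset.mem_range, Nat.lt_succ_iff]
        calc (H.submatrix id (fun j : {j // j ∈ I} => j.1)).rank
            ≤ Fintype.card {j // j ∈ I} := Matrix.rank_le_card_width _
          _ = I.card := Fintype.card_coe I
          _ = ν := hIcard I hI)]
    refine Finset.sum_congr rfl (fun r _ => ?_)
    rw [hN, Finset.sum_congr rfl
      (fun I hI => by rw [(Finset.mem_filter.mp hI).2]), Finset.sum_const, smul_eq_mul]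
  -- each column subset contributes the number of codewords supported on it
  have hK : ∀ I ∈ P, Fintype.card F ^ (ν - (H.submatrix id (fun j : {j // j ∈ I} => j.1)).rank)
      = (CW.filter (fun x => ∀ j, x j ≠ 0 → j ∈ I)).card := by
    intro I hI
    rw [hCW, Finset.filter_filter, aux_kernel_count F H I, hIcard I hI]
  -- double counting
  have hD : ∑ I ∈ P, (CW.filter (fun x => ∀ j, x j ≠ 0 → j ∈ I)).card
      = ∑ x ∈ CW, (P.filter (fun I => ∀ j, x j ≠ 0 → j ∈ I)).card := by
    simp_rw [Finset.card_filter]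
    exact Finset.sum_comm
  -- codeword counts
  have hAcard : ∀ s, A s = (CW.filter (fun x => hammingNorm x = s)).card := by
    intro s
    rw [hA, Nat.card_eq_fintype_card, Fintype.card_subtype, hCW, Finset.filter_filter]
  -- LHS as a sum over codewords
  have hL : ∑ s ∈ range (ν + 1), (n - s).choose (ν - s) * A s
      = ∑ x ∈ CW, (P.filter (fun I => ∀ j, x j ≠ 0 → j ∈ I)).card := by
    rw [← Finset.sum_fiberwise_of_maps_to (g := hammingNorm) (t := range (n + 1))
      (fun x _ => by
        rw [Finset.mem_range, Nat.lt_succ_iff, hnorm]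
        exact (Finset.card_filter_le _ _).trans_eq (by simp))]
    have hinner : ∀ s, ∑ x ∈ CW.filter (fun x => hammingNorm x = s),
        (P.filter (fun I => ∀ j, x j ≠ 0 → j ∈ I)).card
        = (if s ≤ ν then (n - s).choose (ν - s) else 0) * A s := by
      intro s
      rw [hAcard, Finset.sum_congr rfl (fun x hx => ?_), Finset.sum_const, smul_eq_mul,
        mul_comm]
      have hxs : (univ.filter (fun j => x j ≠ 0)).card = s := by
        rw [← hnorm]; exact (Finset.mem_filter.mp hx).2
      have hfc : P.filter (fun I => ∀ j, x j ≠ 0 → j ∈ I)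
          = P.filter (fun I => (univ.filter (fun j => x j ≠ 0)) ⊆ I) := by
        apply Finset.filter_congr
        intro I _
        constructor
        · intro h j hj
          exact h j (Finset.mem_filter.mp hj).2
        · intro h j hj
          exact h (Finset.mem_filter.mpr ⟨Finset.mem_univ j, hj⟩)
      rw [hfc, hP]
      by_cases hsν : s ≤ ν
      · rw [if_pos hsν, aux_count_supersets _ _ (by rw [hxs]; exact hsν), hxs,
          Fintype.card_fin]
      · rw [if_neg hsν, aux_count_supersets_zero _ _ (by rw [hxs]; exact Nat.lt_of_not_le hsν)]
    rw [Finset.sum_congr rfl (fun s _ => hinner s)]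
    rw [← Finset.sum_subset (Finset.range_subset_range.mpr (Nat.succ_le_succ hνn) :
        range (ν + 1) ⊆ range (n + 1))
      (fun s _ hs => by
        rw [Finset.mem_range, Nat.lt_succ_iff] at hs
        rw [if_neg hs, zero_mul])]
    exact Finset.sum_congr rfl (fun s hs => by
      rw [Finset.mem_range, Nat.lt_succ_iff] at hs
      rw [if_pos hs])
  rw [hL, hR, ← hD]
  exact (Finset.sum_congr rfl hK).symm
end

section
/- Let C be a linear [n,k,d] code over F_q with dual distance d⊥, and let σ = (n-k+1-d) + (k+1-d⊥) be the sum of the Singleton defects of C and C⊥. Then the knowledge of any n - d⊥ + 1 values among A_0,...,A_n, together with the linear relations Σ_{s=0}^{ν} binom(n-s,ν-s)A_s = binom(n,ν)q^{ν+k-n} for n-d⊥ < ν ≤ n, determines the full weight distribution uniquely; i.e., the linear system in the remaining d⊥ unknowns has a unique solution. -/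
open Finset Matrix Polynomial

-- key lemma: det of binomial matrix with distinct column arguments is nonzero
theorem det_choose_ne_zero {r : ℕ} (x : Fin r → ℕ) (hx : Function.Injective x) :
    (Matrix.of fun i j : Fin r => ((x j).choose i : ℚ)).det ≠ 0 := by
  classical
  set Sm : Matrix (Fin r) (Fin r) ℚ := Matrix.of fun i m => (descPochhammer ℚ i).coeff m with hSm
  set V : Matrix (Fin r) (Fin r) ℚ := (Matrix.vandermonde fun j => (x j : ℚ))ᵀ with hV
  have hN : Sm * V = Matrix.of fun i j : Fin r => ((x j).descFactorial i : ℚ) := by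
    ext i j
    simp only [Matrix.mul_apply, hSm, hV, Matrix.of_apply, Matrix.transpose_apply,
      Matrix.vandermonde]
    rw [← descPochhammer_eval_eq_descFactorial ℚ (x j) i,
      Polynomial.eval_eq_sum_range' (n := r)
        (by rw [descPochhammer_natDegree]; exact i.isLt)]
    rw [Finset.sum_range fun m => (descPochhammer ℚ i).coeff m * (x j : ℚ) ^ m]
  have hSdet : Sm.det = 1 := by
    rw [Matrix.det_of_lowerTriangular Sm ?_]
    · rw [Finset.prod_eq_one]
      intro i _
      have h1 : (descPochhammer ℚ (i : ℕ)).natDegree = (i : ℕ) := descPochhammer_natDegree ℚ (i : ℕ)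
      have h2 := (monic_descPochhammer ℚ (i : ℕ)).coeff_natDegree
      rw [h1] at h2
      simpa [hSm] using h2
    · intro i j hij
      simp only [hSm, Matrix.of_apply]
      apply Polynomial.coeff_eq_zero_of_natDegree_lt
      rw [descPochhammer_natDegree]
      exact hij
  have hVdet : V.det ≠ 0 := by
    rw [hV, Matrix.det_transpose, Matrix.det_vandermonde]
    apply Finset.prod_ne_zero_iff.mpr
    intro i _
    apply Finset.prod_ne_zero_iff.mpr
    intro j hj
    rw [Finset.mem_Ioi] at hj
    have : x j ≠ x i := fun h => absurd (hx h) (Fin.ne_of_gt hj)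
    intro h
    apply this
    exact_mod_cast sub_eq_zero.mp h
  have hM : (Matrix.of fun i j : Fin r => ((x j).choose i : ℚ))
      = Matrix.diagonal (fun i : Fin r => ((i : ℕ).factorial : ℚ)⁻¹) * (Sm * V) := by
    rw [hN]
    ext i j
    simp only [Matrix.diagonal_mul, Matrix.of_apply]
    rw [Nat.descFactorial_eq_factorial_mul_choose]
    push_cast
    rw [← mul_assoc, inv_mul_cancel₀ (by exact_mod_cast (i : ℕ).factorial_ne_zero), one_mul]
  rw [hM, Matrix.det_mul, Matrix.det_mul, hSdet, Matrix.det_diagonal]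
  refine mul_ne_zero ?_ (mul_ne_zero one_ne_zero hVdet)
  apply Finset.prod_ne_zero_iff.mpr
  intro i _
  exact inv_ne_zero (by exact_mod_cast (i : ℕ).factorial_ne_zero)

/-- **Proposition.** Let `C` be a linear `[n,k,d]` code over `F_q` with dual distance
`d⊥` (so `σ + d - 1 = n - d⊥ + 1`, where `σ` is the sum of the Singleton defects).
Any `n - d⊥ + 1` values of the weight distribution, together with the linear relations
`∑_{s=0}^{ν} C(n-s,ν-s) A_s = C(n,ν) q^{ν+k-n}` for `n - d⊥ < ν ≤ n`, determine the
full weight distribution uniquely. -/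
theorem weight_distribution_determined
    (q n k d dperp : ℕ) (F : Type*) [Field F] [Fintype F] [DecidableEq F]
    (hq : Fintype.card F = q)
    (C : Submodule F (Fin n → F)) (hk : Module.finrank F C = k)
    (hd : IsLeast {w : ℕ | ∃ x : Fin n → F,
      x ∈ C ∧ x ≠ 0 ∧ hammingNorm x = w} d)
    (hdperp : IsLeast {w : ℕ | ∃ y : Fin n → F,
      (∀ x ∈ C, ∑ i, x i * y i = 0) ∧ y ≠ 0 ∧ hammingNorm y = w} dperp)
    (A A' : ℕ → ℚ)
    (hA : ∀ ν, n - dperp < ν → ν ≤ n →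
      ∑ s ∈ range (ν + 1), ((n - s).choose (ν - s) : ℚ) * A s
        = (n.choose ν : ℚ) * (q : ℚ) ^ ((ν : ℤ) + k - n))
    (hA' : ∀ ν, n - dperp < ν → ν ≤ n →
      ∑ s ∈ range (ν + 1), ((n - s).choose (ν - s) : ℚ) * A' s
        = (n.choose ν : ℚ) * (q : ℚ) ^ ((ν : ℤ) + k - n))
    (S : Finset ℕ) (hS : S ⊆ range (n + 1)) (hScard : S.card = n - dperp + 1)
    (hagree : ∀ s ∈ S, A s = A' s) :
    ∀ s ≤ n, A s = A' s := by
  classical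
  -- dperp ≤ n
  obtain ⟨y, -, -, hyn⟩ := hdperp.1
  have hdn : dperp ≤ n := by
    rw [← hyn]
    simpa using (hammingNorm_le_card_fintype (x := y))
  set B : ℕ → ℚ := fun s => A s - A' s with hB
  have hBS : ∀ s ∈ S, B s = 0 := fun s hs => by simp [hB, hagree s hs]
  -- homogeneous equations
  have heq : ∀ i : ℕ, i < dperp →
      ∑ s ∈ range (n + 1), ((n - s).choose i : ℚ) * B s = 0 := by
    intro i hi
    set ν := n - i with hν
    have hν1 : n - dperp < ν := by omega
    have hν2 : ν ≤ n := by omega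
    have h0 : ∑ s ∈ range (ν + 1), ((n - s).choose (ν - s) : ℚ) * B s = 0 := by
      have := hA ν hν1 hν2
      have h' := hA' ν hν1 hν2
      simp only [hB, mul_sub, Finset.sum_sub_distrib]
      rw [this, h', sub_self]
    have hsub : range (ν + 1) ⊆ range (n + 1) := Finset.range_subset_range.mpr (by omega)
    have hext : ∑ s ∈ range (n + 1), ((n - s).choose i : ℚ) * B s
        = ∑ s ∈ range (ν + 1), ((n - s).choose i : ℚ) * B s := by
      refine (Finset.sum_subset hsub ?_).symm
      intro s hs hns
      rw [Finset.mem_range] at hs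
      rw [Finset.mem_range, not_lt] at hns
      have : n - s < i := by omega
      rw [Nat.choose_eq_zero_of_lt this]
      simp
    rw [hext, ← h0]
    apply Finset.sum_congr rfl
    intro s hs
    rw [Finset.mem_range] at hs
    have h3 : ν - s ≤ n - s := by omega
    have h4 := Nat.choose_symm h3
    have h5 : (n - s) - (ν - s) = i := by omega
    rw [h5] at h4
    rw [h4]
  -- the complement set
  set T : Finset ℕ := range (n + 1) \ S with hT
  have hTcard : T.card = dperp := by
    rw [hT, Finset.card_sdiff_of_subset hS, Finset.card_range, hScard]
    omega
  set e := T.orderEmbOfFin hTcard with he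
  have heT : ∀ j, e j ∈ T := fun j => T.orderEmbOfFin_mem hTcard j
  have hele : ∀ j, e j ≤ n := by
    intro j
    have := heT j
    rw [hT, Finset.mem_sdiff, Finset.mem_range] at this
    omega
  have hx : Function.Injective fun j => n - e j := by
    intro a b hab
    apply e.injective
    simp only at hab
    have := hele a; have := hele b
    omega
  -- sum over T as sum over Fin dperp
  have hsumT : ∀ f : ℕ → ℚ, ∑ s ∈ T, f s = ∑ j : Fin dperp, f (e j) := by
    intro f
    refine (Finset.sum_bij (fun j _ => e j) (fun j _ => heT j) ?_ ?_ (fun j _ => rfl)).symm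
    · intro a _ b _ hab
      exact e.injective hab
    · intro s hs
      have : s ∈ Set.range e := by
        rw [Finset.range_orderEmbOfFin]
        exact hs
      obtain ⟨j, hj⟩ := this
      exact ⟨j, Finset.mem_univ j, hj⟩
  -- matrix equation
  set M : Matrix (Fin dperp) (Fin dperp) ℚ :=
    Matrix.of fun i j => (((n - e j).choose (i : ℕ) : ℚ)) with hM
  set c : Fin dperp → ℚ := fun j => B (e j) with hc
  have hMc : M.mulVec c = 0 := by
    funext i
    have h1 := heq i i.isLt
    rw [← Finset.sum_sdiff hS] at h1
    have h2 : ∑ s ∈ S, ((n - s).choose (i : ℕ) : ℚ) * B s = 0 :=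
      Finset.sum_eq_zero (fun s hs => by rw [hBS s hs, mul_zero])
    rw [h2, add_zero] at h1
    rw [hsumT] at h1
    simpa [Matrix.mulVec, dotProduct, hM, hc] using h1
  have hdet : M.det ≠ 0 := det_choose_ne_zero (fun j => n - e j) hx
  have hcz : c = 0 := by
    have hinj : Function.Injective M.mulVec :=
      Matrix.mulVec_injective_iff_isUnit.mpr
        ((Matrix.isUnit_iff_isUnit_det M).mpr (isUnit_iff_ne_zero.mpr hdet))
    apply hinj
    rw [hMc, Matrix.mulVec_zero]
  -- conclude
  intro s hsn
  by_cases hsS : s ∈ S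
  · exact hagree s hsS
  · have hsT : s ∈ T := by
      rw [hT, Finset.mem_sdiff, Finset.mem_range]
      exact ⟨by omega, hsS⟩
    have : s ∈ Set.range e := by rw [Finset.range_orderEmbOfFin]; exact hsT
    obtain ⟨j, hj⟩ := this
    have : B s = 0 := by
      rw [← hj]
      exact congrFun hcz j
    rw [hB] at this
    simpa [sub_eq_zero] using this
end

section
/- Every r×r minor of the truncated Pascal matrix P_{r,t} = [binom(t-j, i)] with rows indexed by i = 0,...,r-1 and columns by j = 0,...,t (where binom(t-j,i) is taken to be 0 when i+j > t, and t+1 ≥ r ≥ 1) is nonzero. -/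
open Finset Matrix

/-- Every `r × r` minor of the truncated Pascal matrix
`P_{r,t} = [C(t-j, i)]_{i=0..r-1, j=0..t}` (with `t + 1 ≥ r ≥ 1`) is nonzero. -/
theorem truncated_pascal_minors_ne_zero
    (r t : ℕ) (hr : 1 ≤ r) (hrt : r ≤ t + 1)
    (c : Fin r → Fin (t + 1)) (hc : StrictMono c) :
    (Matrix.of fun i j : Fin r => ((t - (c j : ℕ)).choose (i : ℕ) : ℚ)).det ≠ 0 := by
  set v : Fin r → ℚ := fun j => ((t - (c j : ℕ) : ℕ) : ℚ) with hv
  have hvinj : Function.Injective v := by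
    intro a b hab
    have ha : (c a : ℕ) ≤ t := Nat.lt_succ_iff.mp (c a).isLt
    have hb : (c b : ℕ) ≤ t := Nat.lt_succ_iff.mp (c b).isLt
    have : (t - (c a : ℕ)) = (t - (c b : ℕ)) := Nat.cast_injective hab
    have : (c a : ℕ) = (c b : ℕ) := by omega
    exact hc.injective (Fin.ext this)
  set A : Matrix (Fin r) (Fin r) ℚ :=
    Matrix.of (fun i j : Fin r => (descPochhammer ℚ (j : ℕ)).eval (v i)) with hA
  have hdetA : A.det ≠ 0 := by
    rw [hA, ← Matrix.det_eval_matrixOfPolynomials_eq_det_vandermonde v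
      (fun j : Fin r => descPochhammer ℚ (j : ℕ))
      (fun j => descPochhammer_natDegree ℚ _)
      (fun j => monic_descPochhammer _ _)]
    exact Matrix.det_vandermonde_ne_zero_iff.mpr hvinj
  have key : (Matrix.of fun i j : Fin r => ((t - (c j : ℕ)).choose (i : ℕ) : ℚ))ᵀ
      = A * Matrix.diagonal (fun j : Fin r => (((j : ℕ).factorial : ℚ))⁻¹) := by
    ext i j
    rw [Matrix.mul_diagonal]
    simp only [Matrix.transpose_apply, Matrix.of_apply, hA, hv]
    rw [descPochhammer_eval_eq_descFactorial, Nat.descFactorial_eq_factorial_mul_choose]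
    push_cast
    field_simp
  have := congrArg Matrix.det key
  rw [Matrix.det_transpose, Matrix.det_mul, Matrix.det_diagonal] at this
  rw [this]
  refine mul_ne_zero hdetA (Finset.prod_ne_zero_iff.mpr fun j _ => ?_)
  exact inv_ne_zero (Nat.cast_ne_zero.mpr (Nat.factorial_ne_zero _))
end

section
/- Let C be an MDS code, i.e., a linear [n,k,d] code over F_q with d = n-k+1. Then for each w with d ≤ w ≤ n, the number of codewords of weight w is A_w = binom(n,w) · Σ_{j=0}^{w-d} (-1)^j binom(w,j) (q^{w-d+1-j} - 1). -/
open Finset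


private lemma mds_pow_neg_one (a b : ℕ) (hb : b ≤ a) :
    (-1:ℚ)^(a-b) = (-1)^a * (-1)^b := by
  rw [← pow_add, show a + b = (a-b) + 2*b by omega, pow_add, pow_mul]
  norm_num

lemma mds_aux_inner {α : Type*} [DecidableEq α] (S R : Finset α) (hRS : R ⊆ S) :
    ∑ T ∈ {T ∈ S.powerset | R ⊆ T}, (-1:ℚ)^(#S - #T)
      = if R = S then 1 else 0 := by
  have himg : {T ∈ S.powerset | R ⊆ T} = (S \ R).powerset.image (fun T' => R ∪ T') := by
    ext T
    simp only [mem_filter, mem_powerset, mem_image]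
    constructor
    · rintro ⟨h1, h2⟩
      exact ⟨T \ R, sdiff_subset_sdiff h1 le_rfl, by rw [union_sdiff_of_subset h2]⟩
    · rintro ⟨T', hT', rfl⟩
      exact ⟨union_subset hRS ((subset_sdiff.mp hT').1), subset_union_left⟩
  rw [himg, sum_image ?inj]
  case inj =>
    intro a ha b hb hab
    rw [mem_coe, mem_powerset, subset_sdiff] at ha hb
    rw [← union_sdiff_cancel_left ha.2.symm, ← union_sdiff_cancel_left hb.2.symm, show R ∪ a = R ∪ b from hab]
  have hterm : ∀ T' ∈ (S \ R).powerset,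
      (-1:ℚ)^(#S - #(R ∪ T')) = ((-1)^#S * (-1)^#R) * (-1)^#T' := by
    intro T' hT'
    rw [mem_powerset, subset_sdiff] at hT'
    have hcard : #(R ∪ T') = #R + #T' := card_union_of_disjoint hT'.2.symm
    have hle : #R + #T' ≤ #S := hcard ▸ card_le_card (union_subset hRS hT'.1)
    rw [hcard, mds_pow_neg_one _ _ hle, pow_add, mul_assoc]
  rw [sum_congr rfl hterm, ← mul_sum]
  have hz : ∑ T' ∈ (S \ R).powerset, (-1:ℚ)^#T'
      = if S \ R = ∅ then 1 else 0 := by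
    have := @Finset.sum_powerset_neg_one_pow_card α _ (S \ R)
    calc ∑ T' ∈ (S \ R).powerset, (-1:ℚ)^#T'
        = ((∑ T' ∈ (S \ R).powerset, (-1:ℤ)^#T' : ℤ) : ℚ) := by push_cast; rfl
      _ = _ := by rw [this]; split <;> norm_num
  rw [hz]
  by_cases hRSe : R = S
  · simp [hRSe, sdiff_eq_empty_iff_subset.mpr (le_refl S), ← pow_add]
  · have : S \ R ≠ ∅ := by
      intro h
      exact hRSe (Subset.antisymm hRS (sdiff_eq_empty_iff_subset.mp h))
    simp [hRSe, this]

lemma mds_aux_mobius {α : Type*} [DecidableEq α]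
    (f g : Finset α → ℚ) (h : ∀ T, g T = ∑ R ∈ T.powerset, f R) (S : Finset α) :
    f S = ∑ T ∈ S.powerset, (-1 : ℚ) ^ (#S - #T) * g T := by
  have key : ∀ T ∈ S.powerset, (-1:ℚ)^(#S-#T) * g T
      = ∑ R ∈ T.powerset, (-1:ℚ)^(#S-#T) * f R := by
    intro T hT; rw [h T, mul_sum]
  rw [sum_congr rfl key]
  rw [sum_comm' (s' := fun R => {T ∈ S.powerset | R ⊆ T}) (t' := S.powerset)
    (fun T R => by
      simp only [mem_powerset, mem_filter]
      constructor
      · rintro ⟨h1, h2⟩; exact ⟨⟨h1, h2⟩, h2.trans h1⟩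
      · rintro ⟨⟨h1, h2⟩, _⟩; exact ⟨h1, h2⟩)]
  have key2 : ∀ R ∈ S.powerset,
      ∑ T ∈ {T ∈ S.powerset | R ⊆ T}, (-1:ℚ)^(#S-#T) * f R
        = (if R = S then 1 else 0) * f R := by
    intro R hR
    rw [← sum_mul, mds_aux_inner S R (mem_powerset.mp hR)]
  rw [sum_congr rfl key2]
  rw [Finset.sum_congr rfl (fun R _ => ite_mul (R = S) (1:ℚ) 0 (f R))]
  simp [Finset.sum_ite_eq' S.powerset S f]

lemma mds_aux_bij (F : Type*) [Field F] [Fintype F] [DecidableEq F]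
    (n k d : ℕ) (C : Submodule F (Fin n → F)) (hk : Module.finrank F C = k)
    (hlb : ∀ x ∈ C, x ≠ 0 → d ≤ hammingNorm x) (hdk : n - k < d)
    (U : Finset (Fin n)) (hU : #U = k) :
    Function.Bijective (fun (x : C) (i : U) => (x : Fin n → F) i) := by
  classical
  rw [Nat.bijective_iff_injective_and_card]
  constructor
  · intro x y hxy
    by_contra hne
    have hxyC : (x : Fin n → F) - y ∈ C := sub_mem x.2 y.2
    have hne' : (x : Fin n → F) - (y : Fin n → F) ≠ 0 := by
      intro h0; exact hne (Subtype.ext (sub_eq_zero.mp h0))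
    have hnorm := hlb _ hxyC hne'
    have hsub : (univ.filter fun i => ((x : Fin n → F) - (y : Fin n → F)) i ≠ 0) ⊆ univ \ U := by
      intro i hi
      simp only [mem_filter, mem_univ, true_and, Pi.sub_apply, ne_eq] at hi
      rw [mem_sdiff]
      refine ⟨mem_univ _, fun hiU => hi ?_⟩
      have := congr_fun hxy ⟨i, hiU⟩
      simpa [sub_eq_zero] using this
    have hcard : hammingNorm ((x : Fin n → F) - (y : Fin n → F)) ≤ n - k := by
      calc hammingNorm ((x : Fin n → F) - (y : Fin n → F)) ≤ #(univ \ U) := by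
            rw [hammingNorm]; exact card_le_card hsub
        _ = n - k := by rw [card_sdiff_of_subset (subset_univ _), card_univ, Fintype.card_fin, hU]
    omega
  · have h1 : Nat.card C = Fintype.card F ^ k := by
      have : Fintype C := Fintype.ofFinite _
      rw [Nat.card_eq_fintype_card, Module.card_eq_pow_finrank (K := F) (V := C), hk]
    have h2 : Nat.card (↥U → F) = Fintype.card F ^ k := by
      rw [Nat.card_eq_fintype_card, Fintype.card_fun, Fintype.card_coe, hU]
    rw [h1, h2]
lemma mds_aux_count (F : Type*) [Field F] [Fintype F] [DecidableEq F]
    (n k d : ℕ) (C : Submodule F (Fin n → F)) (hk : Module.finrank F C = k)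
    (hlb : ∀ x ∈ C, x ≠ 0 → d ≤ hammingNorm x) (hdk : n - k < d) (hkn : k ≤ n)
    (S : Finset (Fin n)) (hS : n - k ≤ #S) :
    Nat.card {x : Fin n → F // x ∈ C ∧ ∀ i ∉ S, x i = 0}
      = Fintype.card F ^ (#S - (n - k)) := by
  classical
  have hSn : #S ≤ n := by
    simpa [Fintype.card_fin] using card_le_univ S
  have hSc : #Sᶜ ≤ k := by rw [card_compl, Fintype.card_fin]; omega
  obtain ⟨U, hScU, -, hUcard⟩ := exists_subsuperset_card_eq (subset_univ Sᶜ) hSc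
    (by rw [card_univ, Fintype.card_fin]; exact hkn)
  have e := mds_aux_bij F n k d C hk hlb hdk U hUcard
  have hmemU : ∀ i, i ∉ S → i ∈ U := fun i hi => hScU (mem_compl.mpr hi)
  set Φ : {x : Fin n → F // x ∈ C ∧ ∀ i ∉ S, x i = 0} → (↥(U ∩ S) → F) :=
    fun x i => x.1 i.1 with hΦ
  have hbij : Function.Bijective Φ := by
    constructor
    · rintro ⟨x, hxC, hxS⟩ ⟨y, hyC, hyS⟩ h
      have hrestr : (fun i : U => x i) = (fun i : U => y i) := by
        funext i
        by_cases hiS : (i : Fin n) ∈ S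
        · exact congr_fun h ⟨i, mem_inter.mpr ⟨i.2, hiS⟩⟩
        · rw [hxS _ hiS, hyS _ hiS]
      have h2 := e.injective (a₁ := ⟨x, hxC⟩) (a₂ := ⟨y, hyC⟩) hrestr
      have h3 : x = y := Subtype.ext_iff.mp h2
      exact Subtype.ext h3
    · intro v
      set vt : ↥U → F := fun i =>
        if h : (i : Fin n) ∈ S then v ⟨i, mem_inter.mpr ⟨i.2, h⟩⟩ else 0 with hvt
      obtain ⟨x, hx⟩ := e.surjective vt
      have hx' : ∀ i : ↥U, (x : Fin n → F) i = vt i := fun i => congr_fun hx i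
      have hxS : ∀ i ∉ S, (x : Fin n → F) i = 0 := by
        intro i hi
        have := hx' ⟨i, hmemU i hi⟩
        simpa [hvt, hi] using this
      refine ⟨⟨x, x.2, hxS⟩, ?_⟩
      funext i
      have hiS : (i : Fin n) ∈ S := (mem_inter.mp i.2).2
      have := hx' ⟨i, (mem_inter.mp i.2).1⟩
      simp only [hvt, dif_pos hiS] at this
      simpa [hΦ] using this
  rw [Nat.card_eq_of_bijective Φ hbij, Nat.card_eq_fintype_card,
    Fintype.card_fun, Fintype.card_coe]
  congr 1
  have h1 : #(U ∩ S) + #(U \ S) = #U := card_inter_add_card_sdiff U S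
  have h2 : U \ S = Sᶜ := by
    ext i
    simp only [mem_sdiff, mem_compl]
    exact ⟨fun h => h.2, fun h => ⟨hmemU i h, h⟩⟩
  rw [h2, card_compl, Fintype.card_fin] at h1
  omega

private lemma mds_pow_neg_one' (a b : ℕ) (hb : b ≤ a) :
    (-1:ℚ)^(a-b) = (-1)^a * (-1)^b := by
  rw [← pow_add, show a + b = (a-b) + 2*b by omega, pow_add, pow_mul]
  norm_num

lemma mds_aux_algebra (q w e : ℕ) (hw : e + 1 ≤ w) :
    ∑ m ∈ range (w+1), w.choose m • ((-1:ℚ)^(w-m) * (q:ℚ)^(m-e))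
      = ∑ j ∈ range (w - (e+1) + 1), (-1:ℚ)^j * (w.choose j : ℚ)
          * ((q:ℚ)^(w - (e+1) + 1 - j) - 1) := by
  simp only [nsmul_eq_mul]
  have halt : ∑ m ∈ range (w+1), (w.choose m : ℚ) * (-1:ℚ)^(w-m) = 0 := by
    have hz := Int.alternating_sum_range_choose_of_ne (n := w) (by omega)
    have h1 : ∑ m ∈ range (w+1), (w.choose m : ℚ) * (-1:ℚ)^(w-m)
        = (-1:ℚ)^w * ∑ m ∈ range (w+1), ((-1:ℚ)^m * (w.choose m : ℚ)) := by
      rw [mul_sum]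
      refine sum_congr rfl fun m hm => ?_
      rw [mds_pow_neg_one' w m (by rw [mem_range] at hm; omega)]
      ring
    have h2 : ∑ m ∈ range (w+1), ((-1:ℚ)^m * (w.choose m : ℚ))
        = ((∑ m ∈ range (w+1), ((-1:ℤ)^m * (w.choose m : ℤ)) : ℤ) : ℚ) := by
      push_cast; rfl
    rw [h1, h2, hz]
    simp
  have hsplit : ∑ m ∈ range (w+1), (w.choose m : ℚ) * ((-1:ℚ)^(w-m) * (q:ℚ)^(m-e))
      = (∑ m ∈ range (e+1), (w.choose m : ℚ) * (-1:ℚ)^(w-m))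
        + ∑ m ∈ Ico (e+1) (w+1), (w.choose m : ℚ) * ((-1:ℚ)^(w-m) * (q:ℚ)^(m-e)) := by
    rw [range_eq_Ico, ← sum_Ico_consecutive _ (Nat.zero_le (e+1)) (by omega : e+1 ≤ w+1),
      ← range_eq_Ico]
    congr 1
    refine sum_congr rfl fun m hm => ?_
    rw [mem_range] at hm
    rw [show m - e = 0 by omega, pow_zero, mul_one]
  have halt2 : ∑ m ∈ range (e+1), (w.choose m : ℚ) * (-1:ℚ)^(w-m)
      = - ∑ m ∈ Ico (e+1) (w+1), (w.choose m : ℚ) * (-1:ℚ)^(w-m) := by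
    have h3 := halt
    rw [range_eq_Ico, ← sum_Ico_consecutive (fun m => (w.choose m : ℚ) * (-1:ℚ)^(w-m))
      (Nat.zero_le (e+1)) (by omega : e+1 ≤ w+1), ← range_eq_Ico] at h3
    linarith
  rw [hsplit, halt2]
  have hcomb : - ∑ m ∈ Ico (e+1) (w+1), (w.choose m : ℚ) * (-1:ℚ)^(w-m)
        + ∑ m ∈ Ico (e+1) (w+1), (w.choose m : ℚ) * ((-1:ℚ)^(w-m) * (q:ℚ)^(m-e))
      = ∑ m ∈ Ico (e+1) (w+1), (w.choose m : ℚ) * (-1:ℚ)^(w-m) * ((q:ℚ)^(m-e) - 1) := by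
    rw [neg_add_eq_sub, ← sum_sub_distrib]
    refine sum_congr rfl fun m hm => ?_
    ring
  rw [hcomb]
  refine sum_nbij' (fun m => w - m) (fun j => w - j) ?_ ?_ ?_ ?_ ?_
  · intro m hm; simp only [mem_Ico, mem_range] at *; omega
  · intro j hj; simp only [mem_Ico, mem_range] at *; omega
  · intro m hm; simp only [mem_Ico] at hm; omega
  · intro j hj; simp only [mem_range] at hj; omega
  · intro m hm
    simp only [mem_Ico] at hm
    rw [Nat.choose_symm (by omega : m ≤ w), show w - (e+1) + 1 - (w - m) = m - e by omega]
    ring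

/-- **Weight distribution of MDS codes.** If `C` is an `[n,k,d]` MDS code over `F_q`
(`d = n - k + 1`), then for each `d ≤ w ≤ n`:
`A_w = C(n,w) ∑_{j=0}^{w-d} (-1)^j C(w,j) (q^{w-d+1-j} - 1)`. -/
theorem mds_weight_distribution
    (q n k d : ℕ) (F : Type*) [Field F] [Fintype F] [DecidableEq F]
    (hq : Fintype.card F = q)
    (C : Submodule F (Fin n → F)) (hk : Module.finrank F C = k)
    (hd : IsLeast {w : ℕ | ∃ x : Fin n → F,
      x ∈ C ∧ x ≠ 0 ∧ hammingNorm x = w} d)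
    (hmds : d = n - k + 1)
    (A : ℕ → ℕ)
    (hA : ∀ s, A s = Nat.card {x : Fin n → F // x ∈ C ∧ hammingNorm x = s}) :
    ∀ w, d ≤ w → w ≤ n →
      (A w : ℚ) = (n.choose w : ℚ) *
        ∑ j ∈ range (w - d + 1), (-1 : ℚ) ^ j * (w.choose j : ℚ) *
          ((q : ℚ) ^ (w - d + 1 - j) - 1) := by
  classical
  intro w hwd hwn
  have hkn : k ≤ n := by
    have h1 := Submodule.finrank_le C
    rw [hk, Module.finrank_fin_fun] at h1
    exact h1
  have hlb : ∀ x ∈ C, x ≠ 0 → d ≤ hammingNorm x := fun x hx hne => hd.2 ⟨x, hx, hne, rfl⟩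
  have hdk : n - k < d := by omega
  have hw1 : 1 ≤ w := by omega
  set suppF : (Fin n → F) → Finset (Fin n) :=
    fun x => univ.filter (fun i => x i ≠ 0) with hsuppF
  have hnorm : ∀ x : Fin n → F, hammingNorm x = #(suppF x) := fun x => rfl
  set N : Finset (Fin n) → ℕ :=
    fun S => Nat.card {x : Fin n → F // x ∈ C ∧ ∀ i ∉ S, x i = 0} with hN
  set E : Finset (Fin n) → ℕ :=
    fun S => Nat.card {x : Fin n → F // x ∈ C ∧ suppF x = S} with hE
  -- subtype card to finset card
  have hsub : ∀ p : (Fin n → F) → Prop,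
      Nat.card {x : Fin n → F // p x} = #(univ.filter p) := by
    intro p
    rw [Nat.card_eq_fintype_card, Fintype.card_subtype]
  -- N S = ∑ over subsets, E T
  have hNE : ∀ S : Finset (Fin n), N S = ∑ T ∈ S.powerset, E T := by
    intro S
    simp only [hN]
    rw [hsub (fun x => x ∈ C ∧ ∀ i ∉ S, x i = 0)]
    rw [card_eq_sum_card_fiberwise (f := suppF) (t := S.powerset)
      (by
        intro x hx
        simp only [mem_coe, mem_filter, mem_univ, true_and] at hx
        rw [mem_coe, mem_powerset]
        intro i hi
        simp only [hsuppF, mem_filter, mem_univ, true_and] at hi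
        by_contra hiS
        exact hi (hx.2 i hiS))]
    refine sum_congr rfl fun T hT => ?_
    rw [mem_powerset] at hT
    simp only [hE]
    rw [hsub (fun x => x ∈ C ∧ suppF x = T)]
    congr 1
    ext x
    simp only [mem_filter, mem_univ, true_and]
    constructor
    · rintro ⟨⟨hxC, -⟩, hxT⟩; exact ⟨hxC, hxT⟩
    · rintro ⟨hxC, hxT⟩
      refine ⟨⟨hxC, fun i hiS => ?_⟩, hxT⟩
      by_contra hne
      have : i ∈ suppF x := by
        simp only [hsuppF, mem_filter, mem_univ, true_and]; exact hne
      rw [hxT] at this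
      exact hiS (hT this)
  -- A w = ∑ over S of card w, E S
  have hAg : A w = ∑ S ∈ powersetCard w (univ : Finset (Fin n)), E S := by
    rw [hA w, hsub (fun x => x ∈ C ∧ hammingNorm x = w)]
    rw [card_eq_sum_card_fiberwise (f := suppF) (t := powersetCard w univ)
      (by
        intro x hx
        simp only [mem_coe, mem_filter, mem_univ, true_and] at hx
        rw [mem_coe, mem_powersetCard]
        exact ⟨subset_univ _, by rw [← hnorm x]; exact hx.2⟩)]
    refine sum_congr rfl fun S hS => ?_
    rw [mem_powersetCard] at hS
    simp only [hE]
    rw [hsub (fun x => x ∈ C ∧ suppF x = S)]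
    congr 1
    ext x
    simp only [mem_filter, mem_univ, true_and]
    constructor
    · rintro ⟨⟨hxC, -⟩, hxS⟩; exact ⟨hxC, hxS⟩
    · rintro ⟨hxC, hxS⟩
      exact ⟨⟨hxC, by rw [hnorm x, hxS, hS.2]⟩, hxS⟩
  -- value of N
  have hNQ : ∀ T : Finset (Fin n), (N T : ℚ) = (q:ℚ) ^ (#T - (n - k)) := by
    intro T
    by_cases hT : n - k ≤ #T
    · simp only [hN]
      rw [mds_aux_count F n k d C hk hlb hdk hkn T hT, hq]
      push_cast
      rfl
    · have hzero : ∀ x, x ∈ C → (∀ i ∉ T, x i = 0) → x = 0 := by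
        intro x hxC hxT
        by_contra hne
        have h4 := hlb x hxC hne
        have h5 : hammingNorm x ≤ #T := by
          rw [hnorm x]
          apply card_le_card
          intro i hi
          simp only [hsuppF, mem_filter, mem_univ, true_and] at hi
          by_contra hiT
          exact hi (hxT i hiT)
        omega
      have hone : N T = 1 := by
        simp only [hN]
        haveI : Unique {x : Fin n → F // x ∈ C ∧ ∀ i ∉ T, x i = 0} :=
          { default := ⟨0, C.zero_mem, fun i _ => rfl⟩,
            uniq := fun y => Subtype.ext (hzero y.1 y.2.1 y.2.2) }
        exact Nat.card_unique
      rw [hone, show #T - (n - k) = 0 by omega, pow_zero]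
      norm_num
  -- Möbius inversion
  have hg : ∀ T : Finset (Fin n), ((N T : ℚ)) = ∑ R ∈ T.powerset, (E R : ℚ) := by
    intro T; rw [hNE T]; push_cast; rfl
  have hEval : ∀ S ∈ powersetCard w (univ : Finset (Fin n)),
      (E S : ℚ) = ∑ m ∈ range (w+1), w.choose m • ((-1:ℚ)^(w-m) * (q:ℚ)^(m-(n-k))) := by
    intro S hS
    have hSw : #S = w := (mem_powersetCard.mp hS).2
    have hmob := mds_aux_mobius (fun S => (E S : ℚ)) (fun S => (N S : ℚ)) hg S
    rw [hmob]
    have hterm : ∀ T ∈ S.powerset, (-1:ℚ)^(#S - #T) * (N T : ℚ)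
        = (fun m => (-1:ℚ)^(w - m) * (q:ℚ)^(m - (n-k))) #T := by
      intro T hT
      rw [hNQ T, hSw]
    rw [sum_congr rfl hterm, sum_powerset_apply_card
      (fun m => (-1:ℚ)^(w - m) * (q:ℚ)^(m - (n-k))), hSw]
  -- assemble
  have hAQ : (A w : ℚ) = (n.choose w : ℚ) *
      ∑ m ∈ range (w+1), w.choose m • ((-1:ℚ)^(w-m) * (q:ℚ)^(m-(n-k))) := by
    rw [hAg]
    push_cast
    rw [sum_congr rfl hEval, sum_const, card_powersetCard, card_univ, Fintype.card_fin,
      nsmul_eq_mul]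
  rw [hAQ, mds_aux_algebra q w (n-k) (by omega)]
  rw [hmds]
end

section
/- Let C be a near-MDS [n,k,n-k] code over F_q, i.e., d = n-k and the dual code has minimum distance d⊥ = k. Then for every i with 1 ≤ i ≤ k, A_{n-k+i} = binom(n, k-i) · Σ_{j=0}^{i-1} (-1)^j binom(n-k+i, j)(q^{i-j} - 1) + (-1)^i binom(k,i) A_{n-k}. -/
open Finset


lemma my_pow_sub {a b : ℕ} (h : b ≤ a) : (-1:ℚ)^(a - b) = (-1)^a * (-1)^b := by
  have hsq : ((-1:ℚ)^b)*((-1)^b) = 1 := by rw [← mul_pow]; norm_num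
  calc (-1:ℚ)^(a-b) = (-1)^(a-b) * (((-1:ℚ)^b)*((-1)^b)) := by rw [hsq, mul_one]
    _ = ((-1)^(a-b) * (-1)^b) * (-1)^b := by ring
    _ = (-1)^a * (-1)^b := by rw [← pow_add, show a-b+b = a from by omega]

lemma my_sum_pows {α : Type*} [DecidableEq α] (W : Finset α) :
    ∑ V ∈ W.powerset, (-1:ℚ)^(#W - #V) = if W = ∅ then 1 else 0 := by
  have cast0 : ∑ V ∈ W.powerset, (-1:ℚ)^(#V)
      = ((∑ V ∈ W.powerset, (-1:ℤ)^(#V) : ℤ) : ℚ) := by push_cast; rfl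
  have h1 : ∑ V ∈ W.powerset, (-1:ℚ)^(#W - #V)
      = (-1)^(#W) * ∑ V ∈ W.powerset, (-1:ℚ)^(#V) := by
    rw [mul_sum]
    refine Finset.sum_congr rfl fun V hV => ?_
    exact my_pow_sub (card_le_card (mem_powerset.1 hV))
  rw [h1, cast0, Finset.sum_powerset_neg_one_pow_card]
  split_ifs with h
  · subst h; simp
  · simp

lemma my_inner {α : Type*} [DecidableEq α] (S U : Finset α) (hU : U ⊆ S) :
    ∑ T ∈ S.powerset.filter (fun T => U ⊆ T), (-1:ℚ)^(#S - #T)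
      = if U = S then 1 else 0 := by
  have step : ∑ T ∈ S.powerset.filter (fun T => U ⊆ T), (-1:ℚ)^(#S - #T)
      = ∑ V ∈ (S \ U).powerset, (-1:ℚ)^(#(S \ U) - #V) := by
    apply Finset.sum_nbij' (fun T => T \ U) (fun V => V ∪ U)
    · intro T hT
      simp only [mem_filter, mem_powerset] at hT ⊢
      exact sdiff_subset_sdiff hT.1 subset_rfl
    · intro V hV
      simp only [mem_powerset] at hV
      simp only [mem_filter, mem_powerset]
      exact ⟨union_subset (hV.trans sdiff_subset) hU, subset_union_right⟩
    · intro T hT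
      simp only [mem_filter, mem_powerset] at hT
      exact sdiff_union_of_subset hT.2
    · intro V hV
      simp only [mem_powerset] at hV
      exact union_sdiff_cancel_right (disjoint_of_subset_left hV sdiff_disjoint)
    · intro T hT
      simp only [mem_filter, mem_powerset] at hT
      congr 1
      have h1 : #U ≤ #T := card_le_card hT.2
      have h2 : #T ≤ #S := card_le_card hT.1
      rw [card_sdiff_of_subset hU, card_sdiff_of_subset hT.2]
      omega
  rw [step, my_sum_pows]
  have hiff : (S \ U = ∅) ↔ (U = S) := by
    rw [sdiff_eq_empty_iff_subset]
    exact ⟨fun h => hU.antisymm h, fun h => h ▸ subset_rfl⟩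
  simp only [hiff]

lemma my_moebius {α : Type*} [DecidableEq α] (g : Finset α → ℚ) (S : Finset α) :
    ∑ T ∈ S.powerset, (-1:ℚ)^(#S - #T) * ∑ U ∈ T.powerset, g U = g S := by
  have expand : ∑ T ∈ S.powerset, (-1:ℚ)^(#S - #T) * ∑ U ∈ T.powerset, g U
      = ∑ T ∈ S.powerset, ∑ U ∈ T.powerset, (-1:ℚ)^(#S - #T) * g U := by
    refine Finset.sum_congr rfl fun T _ => ?_
    rw [mul_sum]
  rw [expand]
  have swap : ∑ T ∈ S.powerset, ∑ U ∈ T.powerset, (-1:ℚ)^(#S - #T) * g U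
      = ∑ U ∈ S.powerset, ∑ T ∈ S.powerset.filter (fun T => U ⊆ T), (-1:ℚ)^(#S - #T) * g U := by
    apply Finset.sum_comm'
    intro T U
    simp only [mem_powerset, mem_filter, mem_powerset]
    constructor
    · rintro ⟨h1, h2⟩; exact ⟨⟨h1, h2⟩, h2.trans h1⟩
    · rintro ⟨⟨h1, h2⟩, _⟩; exact ⟨h1, h2⟩
  rw [swap]
  have inner : ∀ U ∈ S.powerset,
      ∑ T ∈ S.powerset.filter (fun T => U ⊆ T), (-1:ℚ)^(#S - #T) * g U
        = (if U = S then 1 else 0) * g U := by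
    intro U hU
    rw [← Finset.sum_mul, my_inner S U (mem_powerset.1 hU)]
  rw [Finset.sum_congr rfl inner]
  simp only [ite_mul, one_mul, zero_mul]
  rw [Finset.sum_ite_eq' S.powerset S g]
  simp [mem_powerset.2 (subset_rfl)]

lemma my_card_supersets {α : Type*} [DecidableEq α] {X T : Finset α} (hT : T ⊆ X) {w : ℕ}
    (hw : #T ≤ w) :
    #((X.powersetCard w).filter (fun S => T ⊆ S)) = (#X - #T).choose (w - #T) := by
  have hrw : (#X - #T).choose (w - #T) = #((X \ T).powersetCard (w - #T)) := by
    rw [card_powersetCard, card_sdiff_of_subset hT]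
  rw [hrw]
  apply Finset.card_nbij' (fun S => S \ T) (fun V => V ∪ T)
  · intro S hS
    simp only [mem_coe, mem_filter, mem_powersetCard] at hS
    obtain ⟨⟨h1, h2⟩, h3⟩ := hS
    simp only [mem_coe, mem_powersetCard]
    exact ⟨sdiff_subset_sdiff h1 subset_rfl, by rw [card_sdiff_of_subset h3, h2]⟩
  · intro V hV
    simp only [mem_coe, mem_powersetCard] at hV
    obtain ⟨h1, h2⟩ := hV
    have hdisj : Disjoint V T := disjoint_of_subset_left h1 sdiff_disjoint
    simp only [mem_coe, mem_filter, mem_powersetCard]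
    refine ⟨⟨union_subset (h1.trans sdiff_subset) hT, ?_⟩, subset_union_right⟩
    rw [card_union_of_disjoint hdisj, h2]
    omega
  · intro S hS
    simp only [mem_coe, mem_filter, mem_powersetCard] at hS
    exact sdiff_union_of_subset hS.2
  · intro V hV
    simp only [mem_coe, mem_powersetCard] at hV
    exact union_sdiff_cancel_right (disjoint_of_subset_left hV.1 sdiff_disjoint)

example : True := trivial

lemma my_nat_card_fiberwise {α β : Type*} [Fintype α] [DecidableEq β]
    (P : α → Prop) (h : α → β) (s : Finset β) (H : ∀ x, P x → h x ∈ s) :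
    Nat.card {x // P x} = ∑ b ∈ s, Nat.card {x // P x ∧ h x = b} := by
  classical
  simp only [Nat.card_eq_fintype_card, Fintype.card_subtype]
  rw [Finset.card_eq_sum_card_fiberwise (f := h) (fun x hx => H x (by simpa using (mem_filter.1 hx).2))]
  refine Finset.sum_congr rfl fun b _ => ?_
  congr 1
  ext x
  simp [and_assoc]

lemma my_algebra (d i : ℕ) (hd : 1 ≤ d) (hi : 1 ≤ i) (Q : ℚ) :
    ∑ m ∈ range (d + i + 1), ((d+i).choose m : ℚ) * ((-1:ℚ)^(d + i - m) * Q^(m - d))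
      = ∑ j ∈ range i, (-1:ℚ)^j * ((d+i).choose j : ℚ) * (Q^(i-j) - 1) := by
  set w := d + i with hw
  have reflect := Finset.sum_range_reflect
    (fun m => ((w).choose m : ℚ) * ((-1:ℚ)^(w - m) * Q^(m - d))) (w + 1)
  rw [← reflect]
  have congr1 : ∀ j ∈ range (w+1),
      ((w).choose (w + 1 - 1 - j) : ℚ) * ((-1:ℚ)^(w - (w + 1 - 1 - j)) * Q^((w + 1 - 1 - j) - d))
      = (-1:ℚ)^j * ((w).choose j : ℚ) * (Q^(i-j) - 1) + (-1:ℚ)^j * ((w).choose j : ℚ) := by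
    intro j hj
    rw [mem_range] at hj
    have hjw : j ≤ w := by omega
    have e1 : w + 1 - 1 - j = w - j := by omega
    have e2 : w - (w - j) = j := by omega
    have e3 : (w - j) - d = i - j := by omega
    have e4 : (w).choose (w - j) = (w).choose j := Nat.choose_symm hjw
    rw [e1, e2, e3, e4]
    ring
  rw [Finset.sum_congr rfl congr1, Finset.sum_add_distrib]
  have alt : ∑ j ∈ range (w+1), (-1:ℚ)^j * ((w).choose j : ℚ) = 0 := by
    have := Int.alternating_sum_range_choose_of_ne (n := w) (by omega)
    have cast : ∑ j ∈ range (w+1), (-1:ℚ)^j * ((w).choose j : ℚ)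
        = ((∑ j ∈ range (w+1), ((-1)^j * (w).choose j : ℤ) : ℤ) : ℚ) := by push_cast; rfl
    rw [cast, this]; rfl
  rw [alt, add_zero]
  symm
  apply Finset.sum_subset
  · intro j hj; rw [mem_range] at *; omega
  · intro j hj hj2
    rw [mem_range] at *
    have : i - j = 0 := by omega
    rw [this]
    simp

lemma my_count (q n k : ℕ) (F : Type*) [Field F] [Fintype F] [DecidableEq F]
    (hq : Fintype.card F = q) (C : Submodule F (Fin n → F)) (hk : Module.finrank F C = k)
    (hdual : ∀ y : Fin n → F, (∀ x ∈ C, ∑ i, x i * y i = 0) → y ≠ 0 → k ≤ hammingNorm y)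
    (hkn : k ≤ n) (T : Finset (Fin n)) (hT : n - k < #T) :
    Nat.card {x : Fin n → F // x ∈ C ∧ ∀ j ∉ T, x j = 0} = q ^ (#T - (n - k)) := by
  classical
  have hTn : #T ≤ n := by
    simpa using card_le_card (subset_univ T)
  set φ : C →ₗ[F] ((↥(Tᶜ : Finset (Fin n))) → F) :=
    (LinearMap.funLeft F F (fun j : ↥(Tᶜ : Finset (Fin n)) => (j : Fin n))).comp C.subtype with hφ
  have hφapp : ∀ (x : C) (i : ↥(Tᶜ : Finset (Fin n))), φ x i = (x : Fin n → F) i := by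
    intro x i; rfl
  -- surjectivity
  have hsurj : Function.Surjective φ := by
    by_contra hns
    have hlt : LinearMap.range φ < ⊤ :=
      lt_top_iff_ne_top.2 (fun h => hns (LinearMap.range_eq_top.1 h))
    obtain ⟨ψ, hψ0, hψ⟩ := Submodule.exists_dual_map_eq_bot_of_lt_top hlt inferInstance
    set e : ↥(Tᶜ : Finset (Fin n)) → F :=
      fun i => ψ (fun j => if i = j then 1 else 0) with he
    set y : Fin n → F :=
      fun j => if h : j ∈ Tᶜ then e ⟨j, h⟩ else 0 with hy
    have hye : ∀ i : ↥(Tᶜ : Finset (Fin n)), y (i : Fin n) = e i := by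
      intro i
      rw [hy]
      simp only [dif_pos i.2]
    have hψsum : ∀ v : (↥(Tᶜ : Finset (Fin n))) → F, ψ v = ∑ i, v i * e i := by
      intro v
      rw [LinearMap.pi_apply_eq_sum_univ ψ v]
      simp [he, smul_eq_mul]
    have hortho : ∀ x ∈ C, ∑ j, x j * y j = 0 := by
      intro x hx
      have h1 : ∑ j, x j * y j = ∑ j ∈ (Tᶜ : Finset (Fin n)), x j * y j := by
        symm
        apply Finset.sum_subset (subset_univ _)
        intro j _ hj
        simp only [hy]
        rw [dif_neg hj, mul_zero]
      have h2 : ∑ j ∈ (Tᶜ : Finset (Fin n)), x j * y j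
          = ∑ i : ↥(Tᶜ : Finset (Fin n)), x i * e i := by
        rw [← Finset.sum_attach (Tᶜ) (fun j => x j * y j)]
        rw [univ_eq_attach]
        exact Finset.sum_congr rfl fun i _ => by rw [hye]
      have h3 : ψ (φ ⟨x, hx⟩) = 0 := by
        have hmem : ψ (φ ⟨x, hx⟩) ∈ Submodule.map ψ (LinearMap.range φ) :=
          Submodule.mem_map_of_mem (LinearMap.mem_range_self φ ⟨x, hx⟩)
        rw [hψ] at hmem
        exact (Submodule.mem_bot F).1 hmem
      rw [h1, h2]
      rw [hψsum (φ ⟨x, hx⟩)] at h3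
      simpa [hφapp] using h3
    have hyne : y ≠ 0 := by
      obtain ⟨v, hv⟩ := DFunLike.ne_iff.1 hψ0
      have : ψ v ≠ 0 := by simpa using hv
      rw [hψsum v] at this
      obtain ⟨i, -, hi⟩ := Finset.exists_ne_zero_of_sum_ne_zero this
      have hei : e i ≠ 0 := fun h => hi (by rw [h, mul_zero])
      intro h0
      apply hei
      rw [← hye i, h0]
      rfl
    have hnormle : hammingNorm y ≤ n - #T := by
      have hsub : ({j | y j ≠ 0} : Finset (Fin n)) ⊆ Tᶜ := by
        intro j hj
        simp only [mem_filter] at hj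
        by_contra hjc
        exact hj.2 (by simp only [hy]; rw [dif_neg hjc])
      calc hammingNorm y ≤ #(Tᶜ) := card_le_card hsub
        _ = n - #T := by rw [card_compl, Fintype.card_fin]
    have := hdual y hortho hyne
    omega
  -- kernel identification
  have hker : {x : Fin n → F // x ∈ C ∧ ∀ j ∉ T, x j = 0} ≃ LinearMap.ker φ := by
    refine ⟨fun p => ⟨⟨p.1, p.2.1⟩, ?_⟩, fun z => ⟨(z : C), (z : C).2, ?_⟩, ?_, ?_⟩
    · rw [LinearMap.mem_ker]
      funext i
      exact p.2.2 i.1 (Finset.mem_compl.1 i.2)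
    · intro j hj
      have hz := z.2
      rw [LinearMap.mem_ker] at hz
      have := congrFun hz ⟨j, Finset.mem_compl.2 hj⟩
      simpa [hφapp] using this
    · intro p; rfl
    · intro z; rfl
  -- counting
  haveI : Fintype ↥C := Fintype.ofFinite _
  have hcardC : Nat.card ↥C = q ^ k := by
    rw [Nat.card_eq_fintype_card, Module.card_eq_pow_finrank (K := F) (V := ↥C), hq, hk]
  have hquot : Nat.card (↥C ⧸ LinearMap.ker φ) = q ^ (n - #T) := by
    have := (φ.quotKerEquivOfSurjective hsurj).toEquiv
    rw [Nat.card_congr this]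
    rw [Nat.card_eq_fintype_card, Fintype.card_fun, hq, Fintype.card_coe,
      card_compl, Fintype.card_fin]
  have hmul := Submodule.card_eq_card_quotient_mul_card (LinearMap.ker φ)
  rw [hcardC, hquot] at hmul
  rw [Nat.card_congr hker]
  have hqpos : 0 < q := by rw [← hq]; exact Fintype.card_pos
  have hsplit : q ^ k = q ^ (#T - (n - k)) * q ^ (n - #T) := by
    rw [← pow_add]
    congr 1
    omega
  rw [hsplit] at hmul
  exact Nat.eq_of_mul_eq_mul_right (pow_pos hqpos _) hmul.symm

/-- **Weight distribution of near-MDS codes.** If `C` is an `[n,k,n-k]` NMDS code over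
`F_q` (minimum distance `n - k`, dual distance `k`), then for `1 ≤ i ≤ k`:
`A_{n-k+i} = C(n,k-i) ∑_{j=0}^{i-1} (-1)^j C(n-k+i,j)(q^{i-j}-1) + (-1)^i C(k,i) A_{n-k}`. -/
theorem nmds_weight_distribution
    (q n k : ℕ) (F : Type*) [Field F] [Fintype F] [DecidableEq F]
    (hq : Fintype.card F = q)
    (C : Submodule F (Fin n → F)) (hk : Module.finrank F C = k)
    (hd : IsLeast {w : ℕ | ∃ x : Fin n → F,
      x ∈ C ∧ x ≠ 0 ∧ hammingNorm x = w} (n - k))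
    (hdperp : IsLeast {w : ℕ | ∃ y : Fin n → F,
      (∀ x ∈ C, ∑ i, x i * y i = 0) ∧ y ≠ 0 ∧ hammingNorm y = w} k)
    (A : ℕ → ℕ)
    (hA : ∀ s, A s = Nat.card {x : Fin n → F // x ∈ C ∧ hammingNorm x = s}) :
    ∀ i, 1 ≤ i → i ≤ k →
      (A (n - k + i) : ℚ) = (n.choose (k - i) : ℚ) *
          (∑ j ∈ range i, (-1 : ℚ) ^ j * ((n - k + i).choose j : ℚ) *
            ((q : ℚ) ^ (i - j) - 1))
        + (-1 : ℚ) ^ i * (k.choose i : ℚ) * A (n - k) := by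
  classical
  intro i hi1 hik
  have hkn : k ≤ n := by
    have h1 : Module.finrank F C ≤ Module.finrank F (Fin n → F) := Submodule.finrank_le C
    rwa [hk, Module.finrank_pi, Fintype.card_fin] at h1
  have hd1 : 1 ≤ n - k := by
    obtain ⟨x, hxC, hx0, hxw⟩ := hd.1
    have := hammingNorm_pos_iff.2 hx0
    omega
  have hq1 : 1 ≤ q := by rw [← hq]; exact Fintype.card_pos
  set d := n - k with hdd
  set w := d + i with hww
  have hwn : w ≤ n := by omega
  -- support
  set supp : (Fin n → F) → Finset (Fin n) := fun x => {j | x j ≠ 0} with hsupp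
  have hnorm : ∀ x : Fin n → F, hammingNorm x = #(supp x) := fun x => rfl
  have hmemsupp : ∀ (x : Fin n → F) (j : Fin n), j ∈ supp x ↔ x j ≠ 0 := by
    intro x j; simp [hsupp]
  have hsupp0 : ∀ x : Fin n → F, supp x = ∅ ↔ x = 0 := by
    intro x
    constructor
    · intro h
      funext j
      by_contra hj
      exact absurd h (Finset.ne_empty_of_mem ((hmemsupp x j).2 hj))
    · intro h; subst h; simp [hsupp]
  set g : Finset (Fin n) → ℕ :=
    fun S => Nat.card {x : Fin n → F // x ∈ C ∧ supp x = S} with hg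
  set f : Finset (Fin n) → ℕ :=
    fun T => Nat.card {x : Fin n → F // x ∈ C ∧ ∀ j ∉ T, x j = 0} with hf
  -- (P1) partition of A
  have P1 : ∀ s' : ℕ, A s' = ∑ S ∈ powersetCard s' (univ : Finset (Fin n)), g S := by
    intro s'
    rw [hA s']
    rw [my_nat_card_fiberwise (fun x => x ∈ C ∧ hammingNorm x = s') supp
      (powersetCard s' univ) (fun x hx => by
        rw [mem_powersetCard]
        exact ⟨subset_univ _, by rw [← hnorm, hx.2]⟩)]
    refine Finset.sum_congr rfl fun S hS => ?_
    rw [mem_powersetCard] at hS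
    simp only [hg]
    apply Nat.card_congr
    apply Equiv.subtypeEquivRight
    intro x
    constructor
    · rintro ⟨⟨h1, _⟩, h3⟩; exact ⟨h1, h3⟩
    · rintro ⟨h1, h3⟩; exact ⟨⟨h1, by rw [hnorm, h3, hS.2]⟩, h3⟩
  -- (P2) f as sum of g over powerset
  have hsuppsub : ∀ (x : Fin n → F) (T : Finset (Fin n)),
      (∀ j ∉ T, x j = 0) ↔ supp x ⊆ T := by
    intro x T
    constructor
    · intro h j hj
      by_contra hjT
      exact (hmemsupp x j).1 hj (h j hjT)
    · intro h j hj
      by_contra hx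
      exact hj (h ((hmemsupp x j).2 hx))
  have P2 : ∀ T : Finset (Fin n), f T = ∑ U ∈ T.powerset, g U := by
    intro T
    simp only [hf]
    rw [my_nat_card_fiberwise (fun x => x ∈ C ∧ ∀ j ∉ T, x j = 0) supp
      T.powerset (fun x hx => mem_powerset.2 ((hsuppsub x T).1 hx.2))]
    refine Finset.sum_congr rfl fun U hU => ?_
    rw [mem_powerset] at hU
    simp only [hg]
    apply Nat.card_congr
    apply Equiv.subtypeEquivRight
    intro x
    constructor
    · rintro ⟨⟨h1, _⟩, h3⟩; exact ⟨h1, h3⟩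
    · rintro ⟨h1, h3⟩
      exact ⟨⟨h1, (hsuppsub x T).2 (h3 ▸ hU)⟩, h3⟩
  -- (Z) min distance lower bound
  have Z : ∀ x : Fin n → F, x ∈ C → x ≠ 0 → d ≤ hammingNorm x := by
    intro x hx hx0
    exact hd.2 ⟨x, hx, hx0, rfl⟩
  -- (P4) f for small T
  have P4 : ∀ T : Finset (Fin n), #T < d → f T = 1 := by
    intro T hT
    simp only [hf]
    have hiff : ∀ x : Fin n → F, (x ∈ C ∧ ∀ j ∉ T, x j = 0) ↔ x = 0 := by
      intro x
      constructor
      · rintro ⟨h1, h2⟩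
        by_contra hx0
        have hZ := Z x h1 hx0
        have hle := card_le_card ((hsuppsub x T).1 h2)
        rw [hnorm] at hZ
        omega
      · rintro rfl; exact ⟨C.zero_mem, fun j _ => rfl⟩
    rw [Nat.card_congr (Equiv.subtypeEquivRight hiff), Nat.card_eq_fintype_card,
      Fintype.card_subtype_eq]
  -- (P5) f at T of size d
  have P5 : ∀ T : Finset (Fin n), #T = d → f T = 1 + g T := by
    intro T hT
    have hTne : (∅ : Finset (Fin n)) ≠ T := by
      intro h
      rw [← h] at hT
      simp at hT
      omega
    simp only [hf]
    rw [my_nat_card_fiberwise (fun x => x ∈ C ∧ ∀ j ∉ T, x j = 0) supp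
      ({∅, T} : Finset (Finset (Fin n))) (fun x hx => by
        by_cases hx0 : x = 0
        · subst hx0
          simp [(hsupp0 (0 : Fin n → F)).2 rfl]
        · have hZ := Z x hx.1 hx0
          have hsub := (hsuppsub x T).1 hx.2
          have hle := card_le_card hsub
          rw [hnorm] at hZ
          have : supp x = T := Finset.eq_of_subset_of_card_le hsub (by omega)
          simp [this])]
    rw [Finset.sum_pair hTne]
    congr 1
    · have hiff : ∀ x : Fin n → F,
          ((x ∈ C ∧ ∀ j ∉ T, x j = 0) ∧ supp x = ∅) ↔ x = 0 := by
        intro x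
        constructor
        · rintro ⟨_, h2⟩; exact (hsupp0 x).1 h2
        · rintro rfl
          exact ⟨⟨C.zero_mem, fun j _ => rfl⟩, (hsupp0 (0 : Fin n → F)).2 rfl⟩
      rw [Nat.card_congr (Equiv.subtypeEquivRight hiff), Nat.card_eq_fintype_card,
        Fintype.card_subtype_eq]
    · simp only [hg]
      apply Nat.card_congr
      apply Equiv.subtypeEquivRight
      intro x
      constructor
      · rintro ⟨⟨h1, _⟩, h3⟩; exact ⟨h1, h3⟩
      · rintro ⟨h1, h3⟩
        exact ⟨⟨h1, (hsuppsub x T).2 (by rw [h3])⟩, h3⟩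
  -- (P6) f for large T
  have P6 : ∀ T : Finset (Fin n), d < #T → f T = q ^ (#T - d) := by
    intro T hT
    exact my_count q n k F hq C hk (fun y h1 h2 => hdperp.2 ⟨y, h1, h2, rfl⟩) hkn T (by omega)
  -- combined formula in ℚ
  have fQ : ∀ T : Finset (Fin n),
      (f T : ℚ) = (q:ℚ) ^ (#T - d) + (if #T = d then (g T : ℚ) else 0) := by
    intro T
    rcases lt_trichotomy (#T) d with h | h | h
    · rw [P4 T h, if_neg (by omega), show #T - d = 0 from by omega]
      simp
    · rw [P5 T h, if_pos h, h]
      simp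
    · rw [P6 T h, if_neg (by omega)]
      push_cast [Nat.one_le_iff_ne_zero]
      simp
  set 𝒮 := powersetCard w (univ : Finset (Fin n)) with h𝒮
  have step1 : (A w : ℚ) = ∑ S ∈ 𝒮, (g S : ℚ) := by
    rw [P1 w]
    push_cast
    rfl
  have step2 : ∀ S ∈ 𝒮, (g S : ℚ)
      = ∑ T ∈ S.powerset, (-1:ℚ)^(w - #T) * (f T : ℚ) := by
    intro S hS'
    rw [h𝒮, mem_powersetCard] at hS'
    have hmob := my_moebius (fun U => (g U : ℚ)) S
    rw [hS'.2] at hmob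
    rw [← hmob]
    refine Finset.sum_congr rfl fun T _ => ?_
    congr 1
    rw [P2 T]
    push_cast
    rfl
  have step3 : (A w : ℚ) = (∑ S ∈ 𝒮, ∑ T ∈ S.powerset, (-1:ℚ)^(w - #T) * (q:ℚ)^(#T - d))
      + ∑ S ∈ 𝒮, ∑ T ∈ S.powerset, (-1:ℚ)^(w - #T) * (if #T = d then (g T : ℚ) else 0) := by
    rw [step1, Finset.sum_congr rfl step2, ← Finset.sum_add_distrib]
    refine Finset.sum_congr rfl fun S hS' => ?_
    rw [← Finset.sum_add_distrib]
    refine Finset.sum_congr rfl fun T hT => ?_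
    rw [fQ T]
    ring
  have term2 : ∑ S ∈ 𝒮, ∑ T ∈ S.powerset, (-1:ℚ)^(w - #T) * (if #T = d then (g T : ℚ) else 0)
      = (-1:ℚ)^i * (k.choose i : ℚ) * (A d : ℚ) := by
    have e1 : ∀ S ∈ 𝒮, ∑ T ∈ S.powerset, (-1:ℚ)^(w - #T) * (if #T = d then (g T : ℚ) else 0)
        = ∑ T ∈ S.powersetCard d, (-1:ℚ)^i * (g T : ℚ) := by
      intro S _
      rw [powersetCard_eq_filter, Finset.sum_filter]
      refine Finset.sum_congr rfl fun T _ => ?_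
      by_cases h : #T = d
      · rw [if_pos h, if_pos h, h, show w - d = i from by omega]
      · rw [if_neg h, if_neg h, mul_zero]
    rw [Finset.sum_congr rfl e1]
    have swap : ∑ S ∈ 𝒮, ∑ T ∈ S.powersetCard d, (-1:ℚ)^i * (g T : ℚ)
        = ∑ T ∈ powersetCard d (univ : Finset (Fin n)),
            ∑ S ∈ 𝒮.filter (fun S => T ⊆ S), (-1:ℚ)^i * (g T : ℚ) := by
      apply Finset.sum_comm'
      intro S T
      simp only [h𝒮, mem_powersetCard, mem_filter, subset_univ, true_and]
      tauto
    rw [swap]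
    have e2 : ∀ T ∈ powersetCard d (univ : Finset (Fin n)),
        ∑ S ∈ 𝒮.filter (fun S => T ⊆ S), (-1:ℚ)^i * (g T : ℚ)
        = (k.choose i : ℚ) * ((-1:ℚ)^i * (g T : ℚ)) := by
      intro T hT
      rw [mem_powersetCard] at hT
      rw [Finset.sum_const, h𝒮, my_card_supersets (subset_univ T) (by rw [hT.2]; omega),
        card_univ, Fintype.card_fin, hT.2, show n - d = k from by omega,
        show w - d = i from by omega, nsmul_eq_mul]
    rw [Finset.sum_congr rfl e2, P1 d]
    push_cast
    rw [Finset.mul_sum]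
    exact Finset.sum_congr rfl fun T _ => by ring
  have term1 : ∑ S ∈ 𝒮, ∑ T ∈ S.powerset, (-1:ℚ)^(w - #T) * (q:ℚ)^(#T - d)
      = (n.choose w : ℚ) * ∑ j ∈ range i, (-1:ℚ)^j * (w.choose j : ℚ) * ((q:ℚ)^(i-j) - 1) := by
    have e1 : ∀ S ∈ 𝒮, ∑ T ∈ S.powerset, (-1:ℚ)^(w - #T) * (q:ℚ)^(#T - d)
        = ∑ m ∈ range (w+1), (w.choose m : ℚ) * ((-1:ℚ)^(w-m) * (q:ℚ)^(m-d)) := by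
      intro S hS'
      rw [h𝒮, mem_powersetCard] at hS'
      have happ := Finset.sum_powerset_apply_card
        (fun m => (-1:ℚ)^(w-m) * (q:ℚ)^(m-d)) (x := S)
      rw [hS'.2] at happ
      rw [happ]
      refine Finset.sum_congr rfl fun m _ => ?_
      rw [nsmul_eq_mul]
    rw [Finset.sum_congr rfl e1, Finset.sum_const, h𝒮, card_powersetCard, card_univ,
      Fintype.card_fin, nsmul_eq_mul]
    congr 1
    exact my_algebra d i hd1 hi1 (q:ℚ)
  have hchoose : (n.choose (k - i) : ℚ) = (n.choose w : ℚ) := by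
    rw [show k - i = n - w from by omega, Nat.choose_symm hwn]
  rw [step3, term1, term2, hchoose]
end

section
/- Let C be a linear [n,k] code over F_q with dual distance d⊥. For every integer ν with 0 ≤ ν < d⊥, Σ_{i=ν}^{n} binom(i,ν) A_i = q^{k-ν} binom(n,ν)(q-1)^{ν}. -/
open Finset

section Aux

variable {F : Type*} [Field F] [Fintype F] [DecidableEq F] {n : ℕ}

def pless_fiber_equiv_ker {M N : Type*} [AddCommGroup M] [Module F M] [AddCommGroup N]
    [Module F N] (f : M →ₗ[F] N) {a : N} (x0 : M) (hx0 : f x0 = a) :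
    {x : M // f x = a} ≃ LinearMap.ker f where
  toFun x := ⟨x.1 - x0, by simp [LinearMap.mem_ker, x.2, hx0]⟩
  invFun y := ⟨y.1 + x0, by
    have := y.2; rw [LinearMap.mem_ker] at this; simp [this, hx0]⟩
  left_inv x := by simp
  right_inv y := by simp

lemma pless_proj_surj (C : Submodule F (Fin n → F)) (dperp : ℕ)
    (hlb : ∀ y : Fin n → F,
      (∀ x ∈ C, ∑ i, x i * y i = 0) → y ≠ 0 → dperp ≤ hammingNorm y)
    (S : Finset (Fin n)) (hS : S.card < dperp) :
    Function.Surjective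
      ((LinearMap.funLeft F F (fun j : ↥S => (j : Fin n))).comp C.subtype) := by
  classical
  set p := (LinearMap.funLeft F F (fun j : ↥S => (j : Fin n))).comp C.subtype with hp
  by_contra hns
  have hlt : LinearMap.range p < ⊤ := by
    rw [lt_top_iff_ne_top]
    intro h
    exact hns (LinearMap.range_eq_top.mp h)
  obtain ⟨φ, hφ0, hφ⟩ :=
    (LinearMap.range p).exists_dual_map_eq_bot_of_lt_top hlt inferInstance
  have h0 : ∀ v ∈ LinearMap.range p, φ v = 0 := by
    intro v hv
    have : φ v ∈ (LinearMap.range p).map φ := Submodule.mem_map_of_mem hv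
    rw [hφ] at this
    exact (Submodule.mem_bot F).mp this
  set c : ↥S → F := fun j => φ (fun i => if j = i then 1 else 0) with hc
  have hexp : ∀ a : ↥S → F, φ a = ∑ j, a j * c j := by
    intro a
    conv_lhs => rw [pi_eq_sum_univ a]
    rw [map_sum]
    exact Finset.sum_congr rfl fun j _ => by rw [map_smul, smul_eq_mul]
  set y : Fin n → F := fun i => if h : i ∈ S then c ⟨i, h⟩ else 0 with hy
  have hyj : ∀ j : ↥S, y (j : Fin n) = c j := by
    intro j
    simp only [hy, dif_pos j.2]
  have horth : ∀ x ∈ C, ∑ i, x i * y i = 0 := by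
    intro x hx
    have h1 : ∑ i, x i * y i = ∑ i ∈ S, x i * y i := by
      refine (Finset.sum_subset (Finset.subset_univ S) ?_).symm
      intro i _ hi
      simp [hy, dif_neg hi]
    have h2 : ∑ i ∈ S, x i * y i = ∑ j : ↥S, x j * c j := by
      rw [← Finset.sum_attach S (fun i => x i * y i), Finset.univ_eq_attach]
      exact Finset.sum_congr rfl fun j _ => by rw [hyj j]
    have h3 : (fun j : ↥S => x (j : Fin n)) ∈ LinearMap.range p :=
      ⟨⟨x, hx⟩, rfl⟩
    have h4 := h0 _ h3
    rw [hexp] at h4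
    rw [h1, h2, ← h4]
  have hyne : y ≠ 0 := by
    intro h
    apply hφ0
    refine LinearMap.ext fun a => ?_
    rw [hexp]
    have : ∀ j : ↥S, c j = 0 := fun j => by rw [← hyj j, h]; rfl
    simp [this]
  have hnorm : hammingNorm y ≤ S.card := by
    refine Finset.card_le_card ?_
    intro i hi
    simp only [Finset.mem_filter] at hi
    by_contra hiS
    exact hi.2 (by simp [hy, dif_neg hiS])
  have := hlb y horth hyne
  omega

lemma pless_count_S (C : Submodule F (Fin n → F)) {k q : ℕ} (hq : Fintype.card F = q)
    (hk : Module.finrank F C = k) (S : Finset (Fin n))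
    (hsurj : Function.Surjective
      ((LinearMap.funLeft F F (fun j : ↥S => (j : Fin n))).comp C.subtype)) :
    S.card ≤ k ∧
    Nat.card {x : Fin n → F // x ∈ C ∧ ∀ j ∈ S, x j ≠ 0}
      = (q - 1) ^ S.card * q ^ (k - S.card) := by
  classical
  set p := (LinearMap.funLeft F F (fun j : ↥S => (j : Fin n))).comp C.subtype with hp
  haveI : Fintype ↥C := Fintype.ofFinite _
  have hrangetop : LinearMap.range p = ⊤ := LinearMap.range_eq_top.mpr hsurj
  have hrank : Module.finrank F (↥S → F) = S.card := by
    rw [Module.finrank_pi, Fintype.card_coe]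
  have hrn : S.card + Module.finrank F (LinearMap.ker p) = k := by
    have h := LinearMap.finrank_range_add_finrank_ker p
    rw [hrangetop, finrank_top, hrank, hk] at h
    exact h
  have hνk : S.card ≤ k := le_of_add_le_left (le_of_eq hrn)
  refine ⟨hνk, ?_⟩
  have hker : Nat.card (LinearMap.ker p) = q ^ (k - S.card) := by
    rw [Nat.card_eq_fintype_card, Module.card_eq_pow_finrank (K := F), hq]
    congr 1
    omega
  -- fibers
  have hfib : ∀ a : ↥S → F, Nat.card {x : ↥C // p x = a} = q ^ (k - S.card) := by
    intro a
    obtain ⟨x0, hx0⟩ := hsurj a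
    rw [Nat.card_congr (pless_fiber_equiv_ker p x0 hx0), hker]
  have e1 : {x : Fin n → F // x ∈ C ∧ ∀ j ∈ S, x j ≠ 0}
      ≃ {x : ↥C // ∀ j : ↥S, p x j ≠ 0} :=
    { toFun := fun x => ⟨⟨x.1, x.2.1⟩, fun j => x.2.2 j j.2⟩
      invFun := fun x => ⟨x.1.1, x.1.2, fun j hj => x.2 ⟨j, hj⟩⟩
      left_inv := fun _ => rfl
      right_inv := fun _ => rfl }
  rw [Nat.card_congr e1]
  rw [Nat.card_eq_fintype_card, Fintype.card_subtype]
  have hmaps : ∀ x ∈ Finset.univ.filter (fun x : ↥C => ∀ j : ↥S, p x j ≠ 0),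
      p x ∈ Finset.univ.filter (fun a : ↥S → F => ∀ j, a j ≠ 0) := by
    intro x hx
    simp only [Finset.mem_filter, Finset.mem_univ, true_and] at hx ⊢
    exact hx
  rw [Finset.card_eq_sum_card_fiberwise hmaps]
  have hterm : ∀ a ∈ Finset.univ.filter (fun a : ↥S → F => ∀ j, a j ≠ 0),
      ((Finset.univ.filter (fun x : ↥C => ∀ j : ↥S, p x j ≠ 0)).filter
        (fun x => p x = a)).card = q ^ (k - S.card) := by
    intro a ha
    simp only [Finset.mem_filter, Finset.mem_univ, true_and] at ha
    have : ((Finset.univ.filter (fun x : ↥C => ∀ j : ↥S, p x j ≠ 0)).filter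
        (fun x => p x = a)) = Finset.univ.filter (fun x : ↥C => p x = a) := by
      ext x
      simp only [Finset.filter_filter, Finset.mem_filter, Finset.mem_univ, true_and]
      constructor
      · exact fun h => h.2
      · intro h
        exact ⟨fun j => by rw [h]; exact ha j, h⟩
    rw [this, ← Fintype.card_subtype, ← Nat.card_eq_fintype_card, hfib a]
  rw [Finset.sum_congr rfl hterm, Finset.sum_const, smul_eq_mul]
  congr 1
  rw [← Fintype.card_subtype]
  rw [Fintype.card_congr (Equiv.subtypePiEquivPi (p := fun (_ : ↥S) (b : F) => b ≠ 0))]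
  rw [Fintype.card_pi]
  have : Fintype.card {b : F // b ≠ 0} = q - 1 := by
    rw [← hq]
    simp [Fintype.card_subtype_compl, Fintype.card_subtype_eq]
  simp [this, Fintype.card_coe]

end Aux

/-- **Pless equations below the dual distance.** For a linear `[n,k]` code `C` over `F_q`
with dual distance `d⊥`, for every `0 ≤ ν < d⊥`:
`∑_{i=ν}^{n} C(i,ν) A_i = q^{k-ν} C(n,ν)(q-1)^{ν}`. -/
theorem pless_equations_small_nu
    (q n k dperp : ℕ) (F : Type*) [Field F] [Fintype F] [DecidableEq F]
    (hq : Fintype.card F = q)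
    (C : Submodule F (Fin n → F)) (hk : Module.finrank F C = k)
    (A : ℕ → ℕ)
    (hA : ∀ s, A s = Nat.card {x : Fin n → F // x ∈ C ∧ hammingNorm x = s})
    (hdperp : IsLeast {w : ℕ | ∃ y : Fin n → F,
      (∀ x ∈ C, ∑ i, x i * y i = 0) ∧ y ≠ 0 ∧ hammingNorm y = w} dperp)
    (ν : ℕ) (hν : ν < dperp) :
    ∑ i ∈ Icc ν n, (i.choose ν : ℚ) * A i
      = (q : ℚ) ^ ((k : ℤ) - ν) * (n.choose ν : ℚ) * ((q : ℚ) - 1) ^ ν := by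
  classical
  by_cases hn : ν ≤ n
  swap
  · rw [Finset.Icc_eq_empty (by omega), Finset.sum_empty,
      Nat.choose_eq_zero_of_lt (by omega)]
    simp
  have hq2 : 2 ≤ q := hq ▸ Fintype.one_lt_card
  set supp : (Fin n → F) → Finset (Fin n) :=
    fun x => Finset.univ.filter (fun i => x i ≠ 0) with hsupp
  have hwt : ∀ x : Fin n → F, hammingNorm x = (supp x).card := fun x => rfl
  set CC : Finset (Fin n → F) := Finset.univ.filter (fun x => x ∈ C) with hCC
  have hAi : ∀ i, A i = (CC.filter fun x => hammingNorm x = i).card := by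
    intro i
    rw [hA, Nat.card_eq_fintype_card, Fintype.card_subtype, hCC, Finset.filter_filter]
  have key : ∀ S : Finset (Fin n), S.card = ν →
      (CC.filter fun x => S ⊆ supp x).card = (q - 1) ^ ν * q ^ (k - ν) ∧ ν ≤ k := by
    intro S hS
    have hsurj := pless_proj_surj C dperp
      (fun y h1 h2 => hdperp.2 ⟨y, h1, h2, rfl⟩) S (by omega)
    obtain ⟨h1, h2⟩ := pless_count_S C hq hk S hsurj
    rw [hS] at h1 h2
    refine ⟨?_, h1⟩
    rw [← h2, Nat.card_eq_fintype_card, Fintype.card_subtype]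
    congr 1
    rw [hCC, Finset.filter_filter]
    refine Finset.filter_congr fun x _ => ?_
    constructor
    · intro h
      exact ⟨h.1, fun j hj => (Finset.mem_filter.mp (h.2 hj)).2⟩
    · intro h
      exact ⟨h.1, fun j hj => Finset.mem_filter.mpr ⟨Finset.mem_univ j, h.2 j hj⟩⟩
  obtain ⟨S0, -, hS0⟩ := Finset.exists_subset_card_eq
    (show ν ≤ (Finset.univ : Finset (Fin n)).card by simpa using hn)
  have hνk : ν ≤ k := (key S0 hS0).2
  have main : ∑ i ∈ Icc ν n, i.choose ν * A i
      = n.choose ν * ((q - 1) ^ ν * q ^ (k - ν)) := by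
    have hmaps : ∀ x ∈ CC, hammingNorm x ∈ Finset.range (n + 1) := by
      intro x _
      have := hammingNorm_le_card_fintype (x := x)
      simp only [Fintype.card_fin] at this
      simp only [Finset.mem_range]
      omega
    have step1 : ∑ i ∈ Icc ν n, i.choose ν * A i
        = ∑ i ∈ Finset.range (n + 1), i.choose ν * A i := by
      refine Finset.sum_subset ?_ ?_
      · intro i hi
        simp only [Finset.mem_Icc] at hi
        simp only [Finset.mem_range]
        omega
      · intro i hi hni
        simp only [Finset.mem_range] at hi
        simp only [Finset.mem_Icc] at hni
        rw [Nat.choose_eq_zero_of_lt (by omega), zero_mul]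
    have step2 : ∑ i ∈ Finset.range (n + 1), i.choose ν * A i
        = ∑ x ∈ CC, (hammingNorm x).choose ν := by
      rw [← Finset.sum_fiberwise_of_maps_to hmaps (fun x => (hammingNorm x).choose ν)]
      refine Finset.sum_congr rfl fun i _ => ?_
      rw [hAi i,
        Finset.sum_congr rfl (fun x hx => by rw [(Finset.mem_filter.mp hx).2]),
        Finset.sum_const, smul_eq_mul, mul_comm]
    have step3 : ∑ x ∈ CC, (hammingNorm x).choose ν
        = ∑ x ∈ CC, ∑ S ∈ Finset.powersetCard ν Finset.univ,
            (if S ⊆ supp x then 1 else 0) := by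
      refine Finset.sum_congr rfl fun x _ => ?_
      have hps : Finset.powersetCard ν (supp x)
          = (Finset.powersetCard ν Finset.univ).filter (fun S => S ⊆ supp x) := by
        ext T
        simp only [Finset.mem_powersetCard, Finset.mem_filter]
        constructor
        · exact fun h => ⟨⟨Finset.subset_univ T, h.2⟩, h.1⟩
        · exact fun h => ⟨h.2, h.1.2⟩
      rw [hwt, ← Finset.card_powersetCard, hps, Finset.card_filter]
    have step4 : ∑ x ∈ CC, ∑ S ∈ Finset.powersetCard ν Finset.univ,
            (if S ⊆ supp x then 1 else 0)
        = ∑ S ∈ Finset.powersetCard ν Finset.univ,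
            (CC.filter fun x => S ⊆ supp x).card := by
      rw [Finset.sum_comm]
      exact Finset.sum_congr rfl fun S _ => (Finset.card_filter _ _).symm
    have step5 : ∑ S ∈ Finset.powersetCard ν Finset.univ,
            (CC.filter fun x => S ⊆ supp x).card
        = n.choose ν * ((q - 1) ^ ν * q ^ (k - ν)) := by
      rw [Finset.sum_congr rfl
        (fun S hS => (key S (Finset.mem_powersetCard_univ.mp hS)).1),
        Finset.sum_const, smul_eq_mul, Finset.card_powersetCard]
      simp
    rw [step1, step2, step3, step4, step5]
  have cast1 : ∑ i ∈ Icc ν n, (i.choose ν : ℚ) * A i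
      = ((∑ i ∈ Icc ν n, i.choose ν * A i : ℕ) : ℚ) := by
    push_cast
    rfl
  rw [cast1, main]
  have hz : (k : ℤ) - ν = ((k - ν : ℕ) : ℤ) := by omega
  rw [hz, zpow_natCast]
  push_cast [Nat.cast_sub (show 1 ≤ q by omega)]
  ring
end

section
/- Let C be an extremal doubly-even self-dual binary code of parameters [24m, 12m, 4m+4], with weight distribution satisfying A_i = 0 for i not divisible by 4 and A_i = A_{24m-i}. Then for each ν with 20m-4 < ν ≤ 24m, Σ_{ℓ=1}^{4m-1} binom(20m-4ℓ, ν-4m-4ℓ) A_{4m+4ℓ} = binom(24m, ν)(2^{ν-12m} - 1) - δ(24m, ν), where δ is the Kronecker delta. -/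
open Finset

open Module

private lemma card_two_pow {V : Type*} [AddCommGroup V] [Module (ZMod 2) V] [Finite V] :
    Nat.card V = 2 ^ Module.finrank (ZMod 2) V := by
  have := Fintype.ofFinite V
  rw [Nat.card_eq_fintype_card, card_eq_pow_finrank (K := ZMod 2), ZMod.card]

private lemma ker_count (m : ℕ) (hm : 1 ≤ m)
    (C : Submodule (ZMod 2) (Fin (24 * m) → ZMod 2))
    (hk : Module.finrank (ZMod 2) C = 12 * m)
    (hselfdual : ∀ y : Fin (24 * m) → ZMod 2,
      y ∈ C ↔ ∀ x ∈ C, ∑ i, x i * y i = 0)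
    (hd : IsLeast {w : ℕ | ∃ x : Fin (24 * m) → ZMod 2,
      x ∈ C ∧ x ≠ 0 ∧ hammingNorm x = w} (4 * m + 4))
    (ν : ℕ) (hν1 : 20 * m - 4 < ν) (hν2 : ν ≤ 24 * m)
    (S : Finset (Fin (24 * m))) (hS : S.card = ν) :
    Nat.card {x : Fin (24 * m) → ZMod 2 // x ∈ C ∧ ∀ i, x i ≠ 0 → i ∈ S}
      = 2 ^ (ν - 12 * m) := by
  classical
  set T : Finset (Fin (24 * m)) := Sᶜ with hTdef
  have hT : T.card = 24 * m - ν := by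
    rw [hTdef, Finset.card_compl, Fintype.card_fin, hS]
  let π : C →ₗ[ZMod 2] ({i // i ∈ T} → ZMod 2) :=
    (LinearMap.funLeft (ZMod 2) (ZMod 2) (fun j : {i // i ∈ T} => (j : Fin (24 * m)))).comp
      C.subtype
  have hπ : ∀ (c : C) (j : {i // i ∈ T}), π c j = (c : Fin (24 * m) → ZMod 2) j := fun _ _ => rfl
  -- surjectivity
  have hsurj : Function.Surjective π := by
    rw [← LinearMap.range_eq_top]
    by_contra hne
    obtain ⟨φ, hφ0, hφ⟩ := Submodule.exists_dual_map_eq_bot_of_lt_top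
      (lt_top_iff_ne_top.mpr hne) inferInstance
    have hφ' : ∀ v ∈ LinearMap.range π, φ v = 0 := by
      intro v hv
      have : φ v ∈ Submodule.map φ (LinearMap.range π) := Submodule.mem_map_of_mem hv
      rw [hφ] at this
      exact (Submodule.mem_bot (ZMod 2)).mp this
    set y : {i // i ∈ T} → ZMod 2 := fun j => φ (Pi.single j 1) with hydef
    have hφeq : ∀ v, φ v = ∑ j, v j * y j := by
      intro v
      conv_lhs => rw [pi_eq_sum_univ v]
      rw [map_sum]
      refine Finset.sum_congr rfl fun j _ => ?_
      have : (fun i => if j = i then (1 : ZMod 2) else 0) = Pi.single j 1 := by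
        ext i; simp [Pi.single_apply, eq_comm]
      rw [map_smul, this, smul_eq_mul, hydef]
    have hy0 : y ≠ 0 := by
      intro h
      apply hφ0
      refine LinearMap.ext fun v => ?_
      rw [hφeq v, h]
      simp
    -- extend y by zero
    set y' : Fin (24 * m) → ZMod 2 := fun i => if h : i ∈ T then y ⟨i, h⟩ else 0 with hy'def
    have horth : ∀ x ∈ C, ∑ i, x i * y' i = 0 := by
      intro x hx
      have h1 : ∑ i, x i * y' i = ∑ i ∈ T, x i * y' i := by
        refine (Finset.sum_subset (Finset.subset_univ T) fun i _ hiT => ?_).symm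
        rw [hy'def]
        simp [dif_neg hiT]
      have h2 : ∑ i ∈ T, x i * y' i = ∑ j : {i // i ∈ T}, x j * y j := by
        rw [← Finset.sum_coe_sort T]
        refine Finset.sum_congr rfl fun j _ => ?_
        rw [hy'def]
        simp [dif_pos j.2]
      have h3 : ∑ j : {i // i ∈ T}, x j * y j = φ (π ⟨x, hx⟩) := by
        rw [hφeq]; rfl
      rw [h1, h2, h3]
      exact hφ' _ ⟨⟨x, hx⟩, rfl⟩
    have hy'C : y' ∈ C := (hselfdual y').mpr horth
    have hy'0 : y' ≠ 0 := by
      obtain ⟨j, hj⟩ := Function.ne_iff.mp hy0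
      intro h
      apply hj
      have h2 : y' (j : Fin (24 * m)) = 0 := by rw [h]; rfl
      rw [hy'def] at h2
      simpa [j.2] using h2
    have hnorm : hammingNorm y' ≤ T.card := by
      refine Finset.card_le_card fun i hi => ?_
      simp only [Finset.mem_filter, Finset.mem_univ, true_and] at hi
      by_contra hiT
      apply hi
      rw [hy'def]
      simp [dif_neg hiT]
    have := hd.2 ⟨y', hy'C, hy'0, rfl⟩
    omega
  -- rank computation
  haveI : Module.Finite (ZMod 2) C := inferInstance
  have hfr : Module.finrank (ZMod 2) (LinearMap.ker π) = ν - 12 * m := by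
    have h1 := LinearMap.finrank_range_add_finrank_ker π
    rw [LinearMap.range_eq_top.mpr hsurj, finrank_top,
      Module.finrank_fintype_fun_eq_card, Fintype.card_coe, hk, hT] at h1
    omega
  have hcard : Nat.card (LinearMap.ker π) = 2 ^ (ν - 12 * m) := by
    rw [card_two_pow, hfr]
  rw [← hcard]
  apply Nat.card_congr
  refine ⟨fun z => ⟨⟨z.1, z.2.1⟩, ?_⟩, fun w => ⟨w.1.1, w.1.2, ?_⟩, fun z => rfl, fun w => rfl⟩
  · rw [LinearMap.mem_ker]
    ext j
    rw [hπ]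
    show z.1 (j : Fin (24 * m)) = 0
    by_contra h
    exact absurd (z.2.2 _ h) (Finset.mem_compl.mp j.2)
  · intro i hi
    by_contra hiS
    have hmem : i ∈ T := Finset.mem_compl.mpr hiS
    have := congrFun (w.2 : π w.1 = 0) ⟨i, hmem⟩
    rw [hπ] at this
    exact hi this

private lemma nat_card_filter {α : Type*} [Fintype α] (p : α → Prop) [DecidablePred p] :
    (univ.filter p).card = Nat.card {x // p x} := by
  rw [Nat.card_eq_fintype_card, Fintype.card_subtype]

private lemma count_supersets {n ν : ℕ} (hν : ν ≤ n) (s : Finset (Fin n)) :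
    ((Finset.powersetCard ν (univ : Finset (Fin n))).filter (fun S => s ⊆ S)).card
      = if s.card ≤ ν then (n - s.card).choose (ν - s.card) else 0 := by
  split_ifs with h
  · have hc : (sᶜ : Finset (Fin n)).card = n - s.card := by
      rw [Finset.card_compl, Fintype.card_fin]
    rw [← hc, ← Finset.card_powersetCard]
    apply Finset.card_bij' (fun S _ => S \ s) (fun T _ => T ∪ s)
    · intro S hS
      simp only [Finset.mem_filter, Finset.mem_powersetCard] at hS
      simp only [Finset.mem_powersetCard]
      refine ⟨fun i hi => ?_, ?_⟩
      · simp only [Finset.mem_sdiff] at hi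
        simpa using hi.2
      · rw [Finset.card_sdiff_of_subset hS.2, hS.1.2]
    · intro T hT
      simp only [Finset.mem_powersetCard] at hT
      have hdisj : Disjoint T s := by
        intro u hu1 hu2 i hi
        have := hT.1 (hu1 hi)
        simp only [Finset.mem_compl] at this
        exact absurd (hu2 hi) this
      simp only [Finset.mem_filter, Finset.mem_powersetCard]
      refine ⟨⟨Finset.subset_univ _, ?_⟩, Finset.subset_union_right⟩
      rw [Finset.card_union_of_disjoint hdisj, hT.2]
      omega
    · intro S hS
      simp only [Finset.mem_filter] at hS
      exact Finset.sdiff_union_of_subset hS.2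
    · intro T hT
      simp only [Finset.mem_powersetCard] at hT
      apply Finset.union_sdiff_cancel_right
      intro u hu1 hu2 i hi
      have := hT.1 (hu1 hi)
      simp only [Finset.mem_compl] at this
      exact absurd (hu2 hi) this
  · rw [Finset.card_eq_zero, Finset.filter_eq_empty_iff]
    intro S hS hsub
    rw [Finset.mem_powersetCard] at hS
    exact h (hS.2 ▸ Finset.card_le_card hsub)

/-- **Extremal doubly-even self-dual binary codes.** Let `C` be a `[24m, 12m, 4m+4]`
extremal doubly-even self-dual binary code, with `A_i = 0` for `4 ∤ i` and
`A_i = A_{24m-i}`. Then for each `20m - 4 < ν ≤ 24m`: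
`∑_{ℓ=1}^{4m-1} C(20m-4ℓ, ν-4m-4ℓ) A_{4m+4ℓ} = C(24m,ν)(2^{ν-12m} - 1) - δ(24m,ν)`. -/
theorem extremal_code_relations
    (m : ℕ) (hm : 1 ≤ m)
    (C : Submodule (ZMod 2) (Fin (24 * m) → ZMod 2))
    (hk : Module.finrank (ZMod 2) C = 12 * m)
    (hselfdual : ∀ y : Fin (24 * m) → ZMod 2,
      y ∈ C ↔ ∀ x ∈ C, ∑ i, x i * y i = 0)
    (hd : IsLeast {w : ℕ | ∃ x : Fin (24 * m) → ZMod 2,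
      x ∈ C ∧ x ≠ 0 ∧ hammingNorm x = w} (4 * m + 4))
    (A : ℕ → ℕ)
    (hA : ∀ s, A s = Nat.card {x : Fin (24 * m) → ZMod 2 //
      x ∈ C ∧ hammingNorm x = s})
    (hdiv : ∀ i, ¬ (4 ∣ i) → A i = 0)
    (hsymm : ∀ i ≤ 24 * m, A i = A (24 * m - i)) :
    ∀ ν, 20 * m - 4 < ν → ν ≤ 24 * m →
      ∑ ℓ ∈ Icc 1 (4 * m - 1),
          (if 4 * m + 4 * ℓ ≤ ν then
            (((20 * m - 4 * ℓ).choose (ν - (4 * m + 4 * ℓ))) : ℚ) else 0) * A (4 * m + 4 * ℓ)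
        = ((24 * m).choose ν : ℚ) * ((2 : ℚ) ^ (ν - 12 * m) - 1)
          - (if ν = 24 * m then 1 else 0) := by
  classical
  intro ν hν1 hν2
  set g : ℕ → ℕ := fun w => if w ≤ ν then (24 * m - w).choose (ν - w) else 0 with hgdef
  set CF : Finset (Fin (24 * m) → ZMod 2) := univ.filter (· ∈ C) with hCF
  have hAfilter : ∀ (P : (Fin (24 * m) → ZMod 2) → Prop) [DecidablePred P],
      (CF.filter P).card = Nat.card {x // x ∈ C ∧ P x} := by
    intro P _
    rw [hCF, Finset.filter_filter, nat_card_filter]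
  have hAeq : ∀ i, (CF.filter (fun x => hammingNorm x = i)).card = A i := by
    intro i
    rw [hAfilter, hA]
  -- per-S count
  have hcount : ∀ S ∈ Finset.powersetCard ν (univ : Finset (Fin (24 * m))),
      (CF.filter (fun x => ∀ i, x i ≠ 0 → i ∈ S)).card = 2 ^ (ν - 12 * m) := by
    intro S hS
    rw [hAfilter]
    exact ker_count m hm C hk hselfdual hd ν hν1 hν2 S (Finset.mem_powersetCard.mp hS).2
  -- superset count
  have hsup : ∀ x : Fin (24 * m) → ZMod 2,
      ((Finset.powersetCard ν (univ : Finset (Fin (24 * m)))).filter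
        (fun S => ∀ i, x i ≠ 0 → i ∈ S)).card = g (hammingNorm x) := by
    intro x
    have hiff : ∀ S : Finset (Fin (24 * m)),
        (∀ i, x i ≠ 0 → i ∈ S) ↔ (univ.filter fun i => x i ≠ 0) ⊆ S := by
      intro S
      simp [Finset.subset_iff]
    simp only [hiff]
    rw [count_supersets hν2]
    rfl
  -- double counting
  have hK2 : ∑ i ∈ Finset.range (24 * m + 1), A i * g i
      = (24 * m).choose ν * 2 ^ (ν - 12 * m) := by
    have hdouble : ∑ S ∈ Finset.powersetCard ν (univ : Finset (Fin (24 * m))),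
        (CF.filter (fun x => ∀ i, x i ≠ 0 → i ∈ S)).card
        = ∑ x ∈ CF, ((Finset.powersetCard ν (univ : Finset (Fin (24 * m)))).filter
            (fun S => ∀ i, x i ≠ 0 → i ∈ S)).card := by
      simp_rw [Finset.card_filter]
      exact Finset.sum_comm
    have hlhs : ∑ S ∈ Finset.powersetCard ν (univ : Finset (Fin (24 * m))),
        (CF.filter (fun x => ∀ i, x i ≠ 0 → i ∈ S)).card
        = (24 * m).choose ν * 2 ^ (ν - 12 * m) := by
      rw [Finset.sum_congr rfl hcount, Finset.sum_const, smul_eq_mul,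
        Finset.card_powersetCard, Finset.card_univ, Fintype.card_fin]
    have hmap : ∀ x ∈ CF, hammingNorm x ∈ Finset.range (24 * m + 1) := by
      intro x _
      rw [Finset.mem_range]
      have hle : hammingNorm x ≤ 24 * m := by
        simpa using hammingNorm_le_card_fintype (x := x)
      exact Nat.lt_succ_of_le hle
    have hfib := Finset.sum_fiberwise_of_maps_to hmap (fun x => g (hammingNorm x))
    have hinner : ∀ i ∈ Finset.range (24 * m + 1),
        ∑ x ∈ CF.filter (fun x => hammingNorm x = i), g (hammingNorm x) = A i * g i := by
      intro i _
      rw [Finset.sum_congr rfl (fun x hx => by rw [(Finset.mem_filter.mp hx).2]),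
        Finset.sum_const, smul_eq_mul, hAeq]
    rw [← Finset.sum_congr rfl hinner, hfib, ← Finset.sum_congr rfl (fun x _ => hsup x),
      ← hdouble, hlhs]
  -- A values
  have hA0 : A 0 = 1 := by
    rw [hA]
    have huniq : ∀ z : {x : Fin (24 * m) → ZMod 2 // x ∈ C ∧ hammingNorm x = 0},
        z = ⟨0, C.zero_mem, hammingNorm_zero⟩ :=
      fun z => Subtype.ext (hammingNorm_eq_zero.mp z.2.2)
    rw [Nat.card_eq_one_iff_unique]
    exact ⟨⟨fun a b => (huniq a).trans (huniq b).symm⟩, ⟨⟨0, C.zero_mem, hammingNorm_zero⟩⟩⟩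
  have hAsmall : ∀ i, 1 ≤ i → i ≤ 4 * m + 3 → A i = 0 := by
    intro i h1 h2
    by_contra hne
    rw [hA] at hne
    obtain ⟨⟨x, hxC, hxw⟩⟩ := (Nat.card_ne_zero.mp hne).1
    have hx0 : x ≠ 0 := by
      intro h
      rw [h, hammingNorm_zero] at hxw
      omega
    have := hd.2 ⟨x, hxC, hx0, hxw⟩
    omega
  have hAn : A (24 * m) = 1 := by
    rw [hsymm (24 * m) le_rfl, Nat.sub_self, hA0]
  set E : Finset ℕ :=
    insert 0 (insert (24 * m) ((Finset.Icc 1 (4 * m - 1)).image fun ℓ => 4 * m + 4 * ℓ))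
    with hEdef
  have hEzero : ∀ i ∈ Finset.range (24 * m + 1), i ∉ E → A i = 0 := by
    intro i hi hiE
    rw [Finset.mem_range] at hi
    simp only [hEdef, Finset.mem_insert, Finset.mem_image, Finset.mem_Icc] at hiE
    push_neg at hiE
    obtain ⟨h0, hn, himg⟩ := hiE
    by_cases h4 : 4 ∣ i
    · by_cases hsm : i ≤ 4 * m + 3
      · exact hAsmall i (by omega) hsm
      · by_cases hlg : 20 * m - 3 ≤ i
        · rw [hsymm i (by omega)]
          exact hAsmall _ (by omega) (by omega)
        · exfalso
          obtain ⟨k, hk⟩ := h4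
          exact himg (k - m) (by omega) (by omega)
    · exact hdiv i h4
  have hsubE : E ⊆ Finset.range (24 * m + 1) := by
    intro i hi
    simp only [hEdef, Finset.mem_insert, Finset.mem_image, Finset.mem_Icc] at hi
    rw [Finset.mem_range]
    rcases hi with h | h | ⟨ℓ, hℓ, rfl⟩ <;> omega
  have h0ni : (0 : ℕ) ∉
      insert (24 * m) ((Finset.Icc 1 (4 * m - 1)).image fun ℓ => 4 * m + 4 * ℓ) := by
    simp only [Finset.mem_insert, Finset.mem_image, Finset.mem_Icc]
    push_neg
    exact ⟨by omega, fun ℓ hℓ => by omega⟩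
  have hnni : (24 * m : ℕ) ∉ (Finset.Icc 1 (4 * m - 1)).image fun ℓ => 4 * m + 4 * ℓ := by
    simp only [Finset.mem_image, Finset.mem_Icc]
    push_neg
    intro ℓ hℓ
    omega
  have hinj : ∀ ℓ₁ ∈ Finset.Icc 1 (4 * m - 1), ∀ ℓ₂ ∈ Finset.Icc 1 (4 * m - 1),
      4 * m + 4 * ℓ₁ = 4 * m + 4 * ℓ₂ → ℓ₁ = ℓ₂ := by
    intro ℓ₁ _ ℓ₂ _ h
    omega
  have hEsum : ∑ i ∈ E, A i * g i = ∑ i ∈ Finset.range (24 * m + 1), A i * g i :=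
    Finset.sum_subset hsubE (fun i hi hiE => by rw [hEzero i hi hiE, zero_mul])
  have hg0 : g 0 = (24 * m).choose ν := by
    rw [hgdef]
    simp
  have hgn : A (24 * m) * g (24 * m) = if ν = 24 * m then 1 else 0 := by
    rw [hAn, one_mul, hgdef]
    by_cases h : ν = 24 * m
    · subst h
      simp
    · have : ¬(24 * m ≤ ν) := by omega
      simp [this, h]
  have hK3 : ∑ ℓ ∈ Finset.Icc 1 (4 * m - 1), A (4 * m + 4 * ℓ) * g (4 * m + 4 * ℓ)
      + (24 * m).choose ν + (if ν = 24 * m then 1 else 0)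
      = (24 * m).choose ν * 2 ^ (ν - 12 * m) := by
    rw [← hK2, ← hEsum, hEdef, Finset.sum_insert h0ni, Finset.sum_insert hnni,
      Finset.sum_image hinj, hA0, one_mul, hg0, hgn]
    ring
  -- cast to ℚ
  have hcastsum : ∑ ℓ ∈ Finset.Icc 1 (4 * m - 1),
      (if 4 * m + 4 * ℓ ≤ ν then
        (((20 * m - 4 * ℓ).choose (ν - (4 * m + 4 * ℓ))) : ℚ) else 0) * A (4 * m + 4 * ℓ)
      = ((∑ ℓ ∈ Finset.Icc 1 (4 * m - 1), A (4 * m + 4 * ℓ) * g (4 * m + 4 * ℓ) : ℕ) : ℚ) := by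
    push_cast [hgdef]
    refine Finset.sum_congr rfl fun ℓ hℓ => ?_
    have h24 : 24 * m - (4 * m + 4 * ℓ) = 20 * m - 4 * ℓ := by omega
    rw [h24]
    ring
  have hQ := congrArg (Nat.cast : ℕ → ℚ) hK3
  push_cast at hQ
  rw [hcastsum]
  push_cast
  linear_combination hQ
end
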